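/- For any WSTTS S^sym of a signal σ and a TSWA W, the set of symbolic states reachable from the initial symbolic states, Reach(S^sym), is finite. -/

import Mathlib

attribute [local instance] Classical.propDecidable

namespace QTPM

/-- Comparison operators `<, ≤, >, ≥` used in constraints, guards and zones. -/
inductive CmpOp : Type
  | lt | le | gt | ge

/-- Semantics of a comparison operator on reals. -/
def CmpOp.eval : CmpOp → ℝ → ℝ → Prop
  | .lt, a, b => a < b
  | .le, a, b => a ≤ b
  | .gt, a, b => a > b
  | .ge, a, b => a ≥ b

/-- A semiring `𝕊 = (S, ⊕, ⊗, e⊕, e⊗)`: `(S,⊕,e⊕)` a commutative monoid,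
`(S,⊗,e⊗)` a monoid, `⊗` distributing over `⊕` on both sides, `e⊕` absorbing for `⊗`. -/
class CSemiring (S : Type) : Type where
  add : S → S → S
  mul : S → S → S
  zero : S
  one : S
  add_assoc : ∀ a b c : S, add (add a b) c = add a (add b c)
  add_comm : ∀ a b : S, add a b = add b a
  add_zero : ∀ a : S, add a zero = a
  mul_assoc : ∀ a b c : S, mul (mul a b) c = mul a (mul b c)
  mul_one : ∀ a : S, mul a one = a
  one_mul : ∀ a : S, mul one a = a
  left_distrib : ∀ a b c : S, mul a (add b c) = add (mul a b) (mul a c)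
  right_distrib : ∀ a b c : S, mul (add a b) c = add (mul a c) (mul b c)
  zero_mul : ∀ a : S, mul zero a = zero
  mul_zero : ∀ a : S, mul a zero = zero

/-- A semiring is idempotent if `s ⊕ s = s` for every `s`. -/
def Idem (S : Type) [CSemiring S] : Prop := ∀ s : S, CSemiring.add s s = s

/-- The canonical order of a semiring: `s ⪯ s'` iff `s ⊕ s' = s'`. -/
def csLe {S : Type} [CSemiring S] (s s' : S) : Prop := CSemiring.add s s' = s'

/-- A complete semiring: every (possibly infinite) family has a sum `⊕`, extending the
binary sum, invariant under partitions of the index set, and over which `⊗` distributes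
on both sides. -/
class CompleteCSemiring (S : Type) [CSemiring S] : Type 1 where
  iSum : {ι : Type} → (ι → S) → S
  iSum_empty : ∀ f : Empty → S, iSum f = CSemiring.zero
  iSum_single : ∀ f : Unit → S, iSum f = f ()
  iSum_pair : ∀ f : Bool → S, iSum f = CSemiring.add (f true) (f false)
  iSum_partition : ∀ {ι κ : Type} (p : ι → κ) (f : ι → S),
    iSum f = iSum fun k : κ => iSum fun i : {i : ι // p i = k} => f i.1
  mul_iSum : ∀ {ι : Type} (s : S) (f : ι → S),
    CSemiring.mul s (iSum f) = iSum fun i => CSemiring.mul s (f i)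
  iSum_mul : ∀ {ι : Type} (f : ι → S) (s : S),
    CSemiring.mul (iSum f) s = iSum fun i => CSemiring.mul (f i) s

/-- A piecewise-constant signal `σ = a₁^{τ₁} ⋯ a_n^{τ_n}`: a finite list of
(value, duration) pairs with positive durations. -/
structure Signal (X : Type) : Type where
  entries : List ((X → ℝ) × ℝ)
  pos : ∀ e ∈ entries, (0:ℝ) < e.2

namespace Signal

variable {X : Type}

/-- A default entry, used as a fallback value for out-of-range indexing. -/
noncomputable def dflt (X : Type) : (X → ℝ) × ℝ := (fun _ => 0, 1)

/-- Prefix sums of the durations: `pref σ i = τ₁ + ⋯ + τᵢ`. -/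
noncomputable def pref (σ : Signal X) (i : ℕ) : ℝ := ((σ.entries.take i).map Prod.snd).sum

/-- The duration `|σ| = τ₁ + ⋯ + τ_n` of a signal. -/
noncomputable def dur (σ : Signal X) : ℝ := (σ.entries.map Prod.snd).sum

/-- The number `n` of entries of the signal. -/
def len (σ : Signal X) : ℕ := σ.entries.length

/-- The value `a_{i+1}` of the `i`-th entry (0-indexed). -/
noncomputable def val (σ : Signal X) (i : ℕ) : X → ℝ := (σ.entries.getD i (dflt X)).1

/-- The value `σ(t)` of the signal at time `t`: the value `a_k` where
`τ₁+⋯+τ_{k-1} ≤ t < τ₁+⋯+τ_k`. -/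
noncomputable def valAt (σ : Signal X) (t : ℝ) : X → ℝ :=
  σ.val ((List.range σ.len).findIdx fun i => decide (t < σ.pref (i+1)))

end Signal

/-- Stutter-free sequences: the elements of `(ℝ^X)^⊛` (no two equal consecutive values). -/
def StutterFree {V : Type} (l : List V) : Prop := l.Chain' (· ≠ ·)

/-- Absorbing concatenation `∘` of (stutter-free) sequences: concatenate and merge
equal consecutive elements. -/
noncomputable def absCat {V : Type} (l l' : List V) : List V :=
  List.destutter (· ≠ ·) (l ++ l')

/-- `Values(σ([t,t')))`: the stutter-free sequence of values of `σ` on the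
interval `[t,t')`. -/
noncomputable def Signal.valuesOn {X : Type} (σ : Signal X) (t t' : ℝ) : List (X → ℝ) :=
  List.destutter (· ≠ ·)
    (((List.range σ.len).filter fun i => decide (σ.pref i < t' ∧ t < σ.pref (i+1))).map σ.val)

/-- The restriction `σ([t,t'))` of a signal to the interval `[t,t')`. -/
noncomputable def Signal.restrict {X : Type} (σ : Signal X) (t t' : ℝ) : Signal X where
  entries := (List.range σ.len).filterMap fun i =>
    if h : max (σ.pref i) t < min (σ.pref (i+1)) t' then
      some (σ.val i, min (σ.pref (i+1)) t' - max (σ.pref i) t)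
    else none
  pos := by
    intro e he
    rw [List.mem_filterMap] at he
    obtain ⟨i, -, hi⟩ := he
    by_cases h : max (σ.pref i) t < min (σ.pref (i+1)) t'
    · rw [dif_pos h] at hi
      injection hi with h'
      subst h'
      simpa using sub_pos.mpr h
    · rw [dif_neg h] at hi
      exact absurd hi (by simp)

/-- The constant signal `a^t`. -/
noncomputable def constSignal {X : Type} (a : X → ℝ) (t : ℝ) : Signal X where
  entries := if h : (0:ℝ) < t then [(a, t)] else []
  pos := by
    intro e he
    by_cases h : (0:ℝ) < t
    · rw [dif_pos h] at he
      simp only [List.mem_singleton] at he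
      subst he
      exact h
    · rw [dif_neg h] at he
      simp at he

/-- Clock guards: finite conjunctions of `c ⋈ d` with `d ∈ ℤ≥0`. -/
abbrev Guard (C : Type) : Type := List (C × CmpOp × ℕ)

/-- Constraints over the variables `X`: finite conjunctions of `x ⋈ d` with `d ∈ ℝ`. -/
abbrev VarConstraint (X : Type) : Type := List (X × CmpOp × ℝ)

/-- A timed symbolic automaton (TSA) over `ℝ`, with locations `L` and clocks `C`. -/
structure TSA (X L C : Type) : Type where
  L₀ : Set L
  LF : Set L
  Δ : Set (L × Guard C × Set C × L)
  Δ_finite : Δ.Finite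
  Λ : L → VarConstraint X

/-- A timed symbolic weighted automaton (TSWA) over `ℝ` and a complete semiring `S`:
a TSA together with a cost function `κ`. -/
structure TSWA (X L C S : Type) [CSemiring S] [CompleteCSemiring S]
    extends TSA X L C : Type where
  κ : VarConstraint X → List (X → ℝ) → S

/-- Satisfaction `ν ⊨ g` of a clock guard. -/
def guardSat {C : Type} (ν : C → ℝ) (g : Guard C) : Prop :=
  ∀ p ∈ g, p.2.1.eval (ν p.1) (p.2.2 : ℝ)

/-- The reset `ν[ρ := 0]` of a clock valuation. -/
noncomputable def resetVal {C : Type} (ν : C → ℝ) (ρ : Set C) : C → ℝ :=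
  fun c => if c ∈ ρ then 0 else ν c

/-- States of the WTTS: `(l, ν, t, ā)`. -/
abbrev WState (X L C : Type) : Type := L × (C → ℝ) × ℝ × List (X → ℝ)

/-- The state space `Q` of the WTTS of `σ` and a TSWA. -/
def wttsQ {X L C : Type} (σ : Signal X) : Set (WState X L C) :=
  {q | (∀ c, 0 ≤ q.2.1 c) ∧ 0 ≤ q.2.2.1 ∧ q.2.2.1 ≤ σ.dur ∧ StutterFree q.2.2.2}

/-- The initial states `Q₀ = {(l₀, 0⃗, 0, ε) | l₀ ∈ L₀}` of the WTTS. -/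
def wttsQ0 {X L C : Type} (A : TSA X L C) : Set (WState X L C) :=
  {q | q.1 ∈ A.L₀ ∧ q.2.1 = (fun _ => 0) ∧ q.2.2.1 = 0 ∧ q.2.2.2 = []}

/-- The accepting states `Q_F = {(l_F, ν, |σ|, ε) | l_F ∈ L_F}` of the WTTS. -/
def wttsQF {X L C : Type} (σ : Signal X) (A : TSA X L C) : Set (WState X L C) :=
  {q | q.1 ∈ A.LF ∧ (∀ c, 0 ≤ q.2.1 c) ∧ q.2.2.1 = σ.dur ∧ q.2.2.2 = []}

/-- The transition relation `→` of the WTTS of `σ` and (the TSA of) a TSWA: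
either a discrete transition of the TSA, or time elapse. -/
def wttsStep {X L C : Type} (σ : Signal X) (A : TSA X L C)
    (q q' : WState X L C) : Prop :=
  q ∈ wttsQ σ ∧ q' ∈ wttsQ σ ∧
  ((∃ g ρ, (q.1, g, ρ, q'.1) ∈ A.Δ ∧ guardSat q.2.1 g ∧ q'.2.1 = resetVal q.2.1 ρ ∧
      q'.2.2.1 = q.2.2.1 ∧ q.2.2.2 ≠ [] ∧ q'.2.2.2 = []) ∨
   (q.1 = q'.1 ∧ ∃ τ : ℝ, 0 < τ ∧ q'.2.1 = (fun c => q.2.1 c + τ) ∧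
      q'.2.2.1 = q.2.2.1 + τ ∧
      q'.2.2.2 = absCat q.2.2.2 (σ.valuesOn q.2.2.1 (q.2.2.1 + τ))))

/-- The weight of a WTTS transition: `κ(Λ(l), ā)` if `ā' = ε`, and `e⊗` otherwise. -/
noncomputable def wttsWeight {X L C S : Type} [CSemiring S] [CompleteCSemiring S]
    (W : TSWA X L C S) (q q' : WState X L C) : S :=
  if q'.2.2.2 = [] then W.κ (W.Λ q.1) q.2.2.2 else CSemiring.one

/-- A path of a transition system: a finite sequence of states related by
consecutive transitions. -/
def IsPath {Q : Type} (step : Q → Q → Prop) (π : List Q) : Prop := π.Chain' step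

/-- The path value: the `⊗`-product of the weights of the transitions of a path. -/
noncomputable def pathVal {Q S : Type} [CSemiring S] [CompleteCSemiring S]
    (w : Q → Q → S) : List Q → S
  | [] => CSemiring.one
  | [_] => CSemiring.one
  | q :: q' :: r => CSemiring.mul (w q q') (pathVal w (q' :: r))

/-- The set of paths from a state of `A` to a state of `B`. -/
def PathsBetween {Q : Type} (step : Q → Q → Prop) (A B : Set Q) : Set (List Q) :=
  {π | IsPath step π ∧ (∃ a ∈ A, π.head? = some a) ∧ (∃ b ∈ B, π.getLast? = some b)}

/-- The shortest distance from `A` to `B`: the `⊕`-sum, over all paths from `A` to `B`,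
of the `⊗`-product of the transition weights. -/
noncomputable def sDist {Q S : Type} [CSemiring S] [CompleteCSemiring S]
    (step : Q → Q → Prop) (w : Q → Q → S) (A B : Set Q) : S :=
  CompleteCSemiring.iSum fun π : ↥(PathsBetween step A B) => pathVal w π.1

/-- The trace value `α(S)` of the WTTS `S` of `σ` and `W`: the shortest distance from
the initial states to the accepting states, i.e. `⊕_{π ∈ ARuns(S)} μ(π)`. -/
noncomputable def traceValue {X L C S : Type} [CSemiring S] [CompleteCSemiring S]
    (σ : Signal X) (W : TSWA X L C S) : S :=
  sDist (wttsStep σ W.toTSA) (wttsWeight W) (wttsQ0 W.toTSA) (wttsQF σ W.toTSA)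

/-- The clocks `C ⊔ {T}`: `none` is the fresh clock `T` tracking absolute time. -/
abbrev ClockT (C : Type) : Type := Option C

/-- Symbolic states of the WSTTS: `(l, Z, ā)`. -/
abbrev SymState (X L C : Type) : Type := L × Set (ClockT C → ℝ) × List (X → ℝ)

/-- A zone over the clock set `C'`: a set of clock valuations defined by a finite
conjunction of constraints `c ⋈ d` and `c − c' ⋈ d`. -/
def IsZone {C' : Type} (Z : Set (C' → ℝ)) : Prop :=
  ∃ atoms : List ((C' × CmpOp × ℝ) ⊕ (C' × C' × CmpOp × ℝ)),
    Z = {ν | ∀ a ∈ atoms,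
      match a with
      | .inl p => p.2.1.eval (ν p.1) p.2.2
      | .inr p => p.2.2.1.eval (ν p.1 - ν p.2.1) p.2.2.2}

/-- The symbolic state space `Q^sym` of the WSTTS of `σ` and a TSWA. -/
def symQ {X L C : Type} (σ : Signal X) : Set (SymState X L C) :=
  {q | IsZone q.2.1 ∧ q.2.1.Nonempty ∧ (∀ ν ∈ q.2.1, ν none ≤ σ.dur) ∧
    StutterFree q.2.2 ∧
    (q.2.2 = [] ∨ ∀ ν ∈ q.2.1, absCat q.2.2 [σ.valAt (ν none)] = q.2.2)}

/-- The all-zero clock valuation over `C ⊔ {T}`. -/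
noncomputable def zeroValT {C : Type} : ClockT C → ℝ := fun _ => 0

/-- The initial symbolic states `Q₀^sym = {(l₀, {0⃗}, ε) | l₀ ∈ L₀}`. -/
def symQ0 {X L C : Type} (A : TSA X L C) : Set (SymState X L C) :=
  {q | q.1 ∈ A.L₀ ∧ q.2.1 = {zeroValT} ∧ q.2.2 = []}

/-- The accepting symbolic states
`Q_F^sym = {(l_F, Z, ε) ∈ Q^sym | ∃ν ∈ Z, ν(T) = |σ|}`. -/
def symQF {X L C : Type} (σ : Signal X) (A : TSA X L C) : Set (SymState X L C) :=
  {q | q ∈ symQ σ ∧ q.1 ∈ A.LF ∧ q.2.2 = [] ∧ ∃ ν ∈ q.2.1, ν none = σ.dur}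

/-- The reset `ν[ρ := 0]` of a valuation over `C ⊔ {T}` (the clock `T` is never reset). -/
noncomputable def symResetVal {C : Type} (ν : ClockT C → ℝ) (ρ : Set C) : ClockT C → ℝ :=
  fun c => match c with
    | none => ν none
    | some c' => if c' ∈ ρ then 0 else ν (some c')

/-- The up-closure `{ν + τ | ν ∈ Z, τ > 0}` of a zone under time elapse. -/
def upClosure {C : Type} (Z : Set (ClockT C → ℝ)) : Set (ClockT C → ℝ) :=
  {ν' | ∃ ν ∈ Z, ∃ τ : ℝ, 0 < τ ∧ ν' = fun c => ν c + τ}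

/-- The transition relation `→^sym` of the WSTTS of `σ` and (the TSA of) a TSWA:
a discrete transition of the TSA, a punctual time elapse, or a non-punctual time elapse. -/
def symStep {X L C : Type} (σ : Signal X) (A : TSA X L C)
    (q q' : SymState X L C) : Prop :=
  q ∈ symQ σ ∧ q' ∈ symQ σ ∧
  ((∃ g ρ, (q.1, g, ρ, q'.1) ∈ A.Δ ∧
      q'.2.1 = {ν' | ∃ ν ∈ q.2.1, guardSat (fun c => ν (some c)) g ∧ ν' = symResetVal ν ρ} ∧
      q.2.2 ≠ [] ∧ q'.2.2 = []) ∨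
   (q.1 = q'.1 ∧
      (∃ ν ∈ q.2.1, ∃ ν' ∈ q'.2.1, q'.2.2 = absCat q.2.2 (σ.valuesOn (ν none) (ν' none))) ∧
      (∃ i, 1 ≤ i ∧ i ≤ σ.len ∧
        (q'.2.1 = upClosure q.2.1 ∩ {ν | ν none = σ.pref i} ∨
         q'.2.1 = upClosure q.2.1 ∩ {ν | σ.pref (i-1) < ν none ∧ ν none < σ.pref i}))))

/-- The weight of a WSTTS transition: `κ(Λ(l), ā)` if `ā' = ε`, and `e⊗` otherwise. -/
noncomputable def symWeight {X L C S : Type} [CSemiring S] [CompleteCSemiring S]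
    (W : TSWA X L C S) (q q' : SymState X L C) : S :=
  if q'.2.2 = [] then W.κ (W.Λ q.1) q.2.2 else CSemiring.one

/-- The symbolic trace value `α^sym(S^sym)`: the shortest distance from the initial
symbolic states to the accepting symbolic states, i.e. `⊕_{π ∈ ARuns(S^sym)} μ^sym(π)`. -/
noncomputable def symTraceValue {X L C S : Type} [CSemiring S] [CompleteCSemiring S]
    (σ : Signal X) (W : TSWA X L C S) : S :=
  sDist (symStep σ W.toTSA) (symWeight W) (symQ0 W.toTSA) (symQF σ W.toTSA)

/-- `Reach`: the initial states together with all states reachable from them. -/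
def reach {Q : Type} (step : Q → Q → Prop) (init : Set Q) : Set Q :=
  {q | ∃ q0 ∈ init, Relation.ReflTransGen step q0 q}

/-- Tuples `(l, Z, ā, s)` occurring in intermediate weights. -/
abbrev WTuple (X L C S : Type) : Type := L × Set (ClockT C → ℝ) × List (X → ℝ) × S

/-- The increment function `incr(a,t)`: maps a set `w` of tuples `(l,Z,ā,s)` to the set
of tuples `(l',Z',ā',s')` such that every `ν' ∈ Z'` satisfies `ν'(T) = t` and
`s' = ⊕_{(l,Z,ā,s)∈w} s ⊗ Dist({(l,Z,ā)},{(l',Z',ā')})` computed in the WSTTS of the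
constant signal `a^t` and `W`. -/
noncomputable def incr {X L C S : Type} [CSemiring S] [CompleteCSemiring S]
    (W : TSWA X L C S) (a : X → ℝ) (t : ℝ)
    (w : Set (WTuple X L C S)) : Set (WTuple X L C S) :=
  {p | IsZone p.2.1 ∧ StutterFree p.2.2.1 ∧ (∀ ν ∈ p.2.1, ν none = t) ∧
    p.2.2.2 = CompleteCSemiring.iSum fun q : ↥w =>
      CSemiring.mul q.1.2.2.2
        (sDist (symStep (constSignal a t) W.toTSA) (symWeight W)
          ({(q.1.1, q.1.2.1, q.1.2.2.1)} : Set (SymState X L C))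
          ({(p.1, p.2.1, p.2.2.1)} : Set (SymState X L C)))}

/-- The intermediate weight `weight_i = (incr(a_i,T_i) ∘ ⋯ ∘ incr(a₁,T₁))
({(l₀,{0⃗},ε,e⊗) | l₀ ∈ L₀})`, where `T_j = τ₁ + ⋯ + τ_j`. -/
noncomputable def weightSeq {X L C S : Type} [CSemiring S] [CompleteCSemiring S]
    (σ : Signal X) (W : TSWA X L C S) : ℕ → Set (WTuple X L C S)
  | 0 => {p | p.1 ∈ W.L₀ ∧ p.2.1 = {zeroValT} ∧ p.2.2.1 = [] ∧ p.2.2.2 = CSemiring.one}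
  | i + 1 => incr W (σ.val i) (σ.pref (i+1)) (weightSeq σ W i)

/-- The extension of a clock valuation over `C` to `C ⊔ {T}`, assigning `t` to `T`. -/
def extT {C : Type} (ν : C → ℝ) (t : ℝ) : ClockT C → ℝ :=
  fun c => match c with
    | none => t
    | some c' => ν c'

/-- The restriction `ν|_C` of a clock valuation over `C ⊔ {T}` to `C`. -/
def restrC {C : Type} (ν : ClockT C → ℝ) : C → ℝ := fun c => ν (some c)

/-- The extension of a clock valuation over `C ⊔ {T}` to `C ⊔ {T, 0}`, where the
reference clock `0` (encoded as `none`) has constant value `0`. -/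
def extRef {C : Type} (ν : ClockT C → ℝ) : Option (ClockT C) → ℝ :=
  fun c => match c with
    | none => 0
    | some c' => ν c'

/-- The canonical bound `d_{Z,c,c'}` of a zone: the least constant bounding
`ν(c) − ν(c')` over `Z` (with `∞ = ⊤` when unbounded). -/
noncomputable def zoneBound {C : Type} (Z : Set (ClockT C → ℝ))
    (c c' : Option (ClockT C)) : EReal :=
  sSup ((fun ν => ((extRef ν c - extRef ν c' : ℝ) : EReal)) '' Z)

end QTPM
namespace QTPM

/-! ### Auxiliary development for Statement 6 -/

section Aux

variable {X C : Type}

/-- Real difference of an extended valuation. -/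
def dfr {C : Type} (ν : ClockT C → ℝ) (u v : Option (ClockT C)) : ℝ :=
  extRef ν u - extRef ν v

/-- Real-valued canonical bound of a set of valuations. -/
noncomputable def vB {C : Type} (Z : Set (ClockT C → ℝ)) (u v : Option (ClockT C)) : ℝ :=
  sSup ((fun ν => dfr ν u v) '' Z)

/-- Attainment of a canonical bound. -/
def AttB {C : Type} (Z : Set (ClockT C → ℝ)) (u v : Option (ClockT C)) : Prop :=
  ∃ ν ∈ Z, dfr ν u v = vB Z u v

/-- All clocks are nonnegative, below `T`, and `T ≤ d`. -/
def BoxB {C : Type} (d : ℝ) (Z : Set (ClockT C → ℝ)) : Prop :=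
  ∀ ν ∈ Z, (∀ c, 0 ≤ ν c ∧ ν c ≤ ν none) ∧ ν none ≤ d

/- ### Signal basics -/

lemma pref_zero (σ : Signal X) : σ.pref 0 = 0 := by simp [Signal.pref]

lemma pref_succ (σ : Signal X) {i : ℕ} (hi : i < σ.len) :
    σ.pref (i + 1) = σ.pref i + (σ.entries[i]'hi).2 := by
  unfold Signal.pref
  rw [List.map_take, List.map_take, List.sum_take_succ (p := by simpa [Signal.len] using hi)]
  simp
  rfl

lemma pref_succ_lt (σ : Signal X) {i : ℕ} (hi : i < σ.len) :
    σ.pref i < σ.pref (i + 1) := by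
  rw [pref_succ σ hi]
  have := σ.pos (σ.entries[i]'hi) (List.getElem_mem hi)
  linarith

lemma pref_stable (σ : Signal X) {i : ℕ} (hi : σ.len ≤ i) : σ.pref i = σ.dur := by
  unfold Signal.pref Signal.dur
  rw [List.take_of_length_le (by simpa [Signal.len] using hi)]

lemma pref_mono (σ : Signal X) : Monotone σ.pref := by
  apply monotone_nat_of_le_succ
  intro i
  rcases lt_or_ge i σ.len with h | h
  · exact le_of_lt (pref_succ_lt σ h)
  · rw [pref_stable σ h, pref_stable σ (le_trans h (Nat.le_succ i))]

lemma pref_nonneg (σ : Signal X) (i : ℕ) : 0 ≤ σ.pref i := by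
  have := pref_mono σ (Nat.zero_le i); rwa [pref_zero] at this

lemma dur_nonneg (σ : Signal X) : 0 ≤ σ.dur := by
  rw [← pref_stable σ (le_refl σ.len)]; exact pref_nonneg σ _

lemma pref_le_dur (σ : Signal X) (i : ℕ) : σ.pref i ≤ σ.dur := by
  rcases le_or_gt σ.len i with h | h
  · rw [pref_stable σ h]
  · rw [← pref_stable σ (le_refl σ.len)]; exact pref_mono σ (le_of_lt h)

lemma pref_lt_iff (σ : Signal X) {i j : ℕ} (hj : j ≤ σ.len) :
    σ.pref i < σ.pref j ↔ i < j := by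
  constructor
  · intro h
    by_contra hc
    exact absurd (pref_mono σ (Nat.le_of_not_lt hc)) (not_le.mpr h)
  · intro h
    calc σ.pref i ≤ σ.pref (j - 1) := pref_mono σ (by omega)
    _ < σ.pref (j - 1 + 1) := pref_succ_lt σ (by omega)
    _ = σ.pref j := by congr 1; omega

/- ### vB basics -/

lemma extRef_mem_box {d : ℝ} {Z : Set (ClockT C → ℝ)} (hd : 0 ≤ d) (hB : BoxB d Z)
    {ν : ClockT C → ℝ} (hν : ν ∈ Z) (u : Option (ClockT C)) :
    0 ≤ extRef ν u ∧ extRef ν u ≤ d := by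
  obtain ⟨h1, h2⟩ := hB ν hν
  match u with
  | none => exact ⟨le_refl 0, hd⟩
  | some c =>
    exact ⟨(h1 c).1, le_trans (le_trans (h1 c).2 (h1 none).2) h2⟩

lemma dfr_le_box {d : ℝ} {Z : Set (ClockT C → ℝ)} (hd : 0 ≤ d) (hB : BoxB d Z)
    {ν : ClockT C → ℝ} (hν : ν ∈ Z) (u v : Option (ClockT C)) :
    -d ≤ dfr ν u v ∧ dfr ν u v ≤ d := by
  obtain ⟨hu1, hu2⟩ := extRef_mem_box hd hB hν u
  obtain ⟨hv1, hv2⟩ := extRef_mem_box hd hB hν v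
  constructor <;> [skip; skip] <;> (unfold dfr; linarith)

lemma box_bddAbove {d : ℝ} {Z : Set (ClockT C → ℝ)} (hd : 0 ≤ d) (hB : BoxB d Z)
    (u v : Option (ClockT C)) : BddAbove ((fun ν => dfr ν u v) '' Z) := by
  refine ⟨d, ?_⟩
  rintro x ⟨ν, hν, rfl⟩
  exact (dfr_le_box hd hB hν u v).2

lemma le_vB {Z : Set (ClockT C → ℝ)} (hbdd : ∀ u v, BddAbove ((fun ν => dfr ν u v) '' Z))
    {ν : ClockT C → ℝ} (hν : ν ∈ Z) (u v : Option (ClockT C)) :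
    dfr ν u v ≤ vB Z u v :=
  le_csSup (hbdd u v) ⟨ν, hν, rfl⟩

lemma vB_le {Z : Set (ClockT C → ℝ)} (hne : Z.Nonempty) {u v : Option (ClockT C)} {b : ℝ}
    (h : ∀ ν ∈ Z, dfr ν u v ≤ b) : vB Z u v ≤ b := by
  apply csSup_le (hne.image _)
  rintro x ⟨ν, hν, rfl⟩
  exact h ν hν

lemma vB_diag {Z : Set (ClockT C → ℝ)} (hne : Z.Nonempty) (u : Option (ClockT C)) :
    vB Z u u = 0 := by
  have himg : (fun ν => dfr ν u u) '' Z = {0} := by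
    apply Set.eq_singleton_iff_nonempty_unique_mem.mpr
    refine ⟨hne.image _, ?_⟩
    rintro x ⟨ν, hν, rfl⟩
    simp [dfr]
  rw [vB, himg, csSup_singleton]

lemma vB_triangle {Z : Set (ClockT C → ℝ)} (hne : Z.Nonempty)
    (hbdd : ∀ u v, BddAbove ((fun ν => dfr ν u v) '' Z)) (u x v : Option (ClockT C)) :
    vB Z u v ≤ vB Z u x + vB Z x v := by
  apply vB_le hne
  intro ν hν
  have h1 := le_vB hbdd hν u x
  have h2 := le_vB hbdd hν x v
  have : dfr ν u v = dfr ν u x + dfr ν x v := by unfold dfr; ring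
  linarith

lemma vB_le_box {d : ℝ} {Z : Set (ClockT C → ℝ)} (hd : 0 ≤ d) (hB : BoxB d Z)
    (hne : Z.Nonempty) (u v : Option (ClockT C)) : -d ≤ vB Z u v ∧ vB Z u v ≤ d := by
  obtain ⟨ν, hν⟩ := hne
  constructor
  · exact le_trans (dfr_le_box hd hB hν u v).1 (le_vB (box_bddAbove hd hB) hν u v)
  · exact vB_le ⟨ν, hν⟩ (fun μ hμ => (dfr_le_box hd hB hμ u v).2)

/- ### Atoms and zones -/

/-- Satisfaction of a single zone atom. -/
def Asat {C : Type} (a : (ClockT C × CmpOp × ℝ) ⊕ (ClockT C × ClockT C × CmpOp × ℝ))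
    (ν : ClockT C → ℝ) : Prop :=
  match a with
  | .inl p => p.2.1.eval (ν p.1) p.2.2
  | .inr p => p.2.2.1.eval (ν p.1 - ν p.2.1) p.2.2.2

lemma isZone_iff {Z : Set (ClockT C → ℝ)} :
    IsZone Z ↔ ∃ atoms : List ((ClockT C × CmpOp × ℝ) ⊕ (ClockT C × ClockT C × CmpOp × ℝ)),
      Z = {ν | ∀ a ∈ atoms, Asat a ν} := by
  unfold IsZone Asat
  constructor
  · rintro ⟨atoms, rfl⟩
    refine ⟨atoms, ?_⟩
    ext ν; constructor <;> (intro h a ha; have := h a ha; revert this; cases a <;> simp)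
  · rintro ⟨atoms, rfl⟩
    refine ⟨atoms, ?_⟩
    ext ν; constructor <;> (intro h a ha; have := h a ha; revert this; cases a <;> simp)

/-- Upper-bound predicate, possibly strict. -/
def ubP (s : Bool) (x dd : ℝ) : Prop := bif s then x < dd else x ≤ dd

/-- Normal form of an atom: a (possibly strict) upper bound on a `dfr`. -/
lemma atom_norm (a : (ClockT C × CmpOp × ℝ) ⊕ (ClockT C × ClockT C × CmpOp × ℝ)) :
    ∃ (u v : Option (ClockT C)) (s : Bool) (dd : ℝ),
      ∀ ν, Asat a ν ↔ ubP s (dfr ν u v) dd := by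
  rcases a with ⟨c, op, d⟩ | ⟨c, c', op, d⟩
  · cases op
    · exact ⟨some c, none, true, d, fun ν => by simp [Asat, CmpOp.eval, dfr, extRef, ubP]⟩
    · exact ⟨some c, none, false, d, fun ν => by simp [Asat, CmpOp.eval, dfr, extRef, ubP]⟩
    · refine ⟨none, some c, true, -d, fun ν => ?_⟩
      simp only [Asat, CmpOp.eval, dfr, extRef, ubP, cond_true]
      constructor <;> intro h <;> linarith
    · refine ⟨none, some c, false, -d, fun ν => ?_⟩
      simp only [Asat, CmpOp.eval, dfr, extRef, ubP, cond_false]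
      constructor <;> intro h <;> (simp only [ge_iff_le] at *; linarith)
  · cases op
    · exact ⟨some c, some c', true, d, fun ν => by simp [Asat, CmpOp.eval, dfr, extRef, ubP]⟩
    · exact ⟨some c, some c', false, d, fun ν => by simp [Asat, CmpOp.eval, dfr, extRef, ubP]⟩
    · refine ⟨some c', some c, true, -d, fun ν => ?_⟩
      simp only [Asat, CmpOp.eval, dfr, extRef, ubP, cond_true]
      constructor <;> intro h <;> linarith
    · refine ⟨some c', some c, false, -d, fun ν => ?_⟩
      simp only [Asat, CmpOp.eval, dfr, extRef, ubP, cond_false]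
      constructor <;> intro h <;> (simp only [ge_iff_le] at *; linarith)

lemma dfr_combo (w ν : ClockT C → ℝ) (θ : ℝ) (u v : Option (ClockT C)) :
    dfr (fun c => θ * w c + (1 - θ) * ν c) u v = θ * dfr w u v + (1 - θ) * dfr ν u v := by
  have h : ∀ x : Option (ClockT C),
      extRef (fun c => θ * w c + (1 - θ) * ν c) x = θ * extRef w x + (1 - θ) * extRef ν x := by
    intro x; match x with
    | none => simp [extRef]
    | some c => simp [extRef]
  unfold dfr; rw [h u, h v]; ring

/-- Convex interpolation towards an interior point of a zone. -/
lemma zone_interp {Z : Set (ClockT C → ℝ)} (hZ : IsZone Z) {w ν : ClockT C → ℝ}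
    (hw : w ∈ Z) (hν : ∀ u v, dfr ν u v ≤ vB Z u v) {θ : ℝ} (hθ0 : 0 < θ) (hθ1 : θ ≤ 1) :
    (fun c => θ * w c + (1 - θ) * ν c) ∈ Z := by
  obtain ⟨atoms, rfl⟩ := isZone_iff.mp hZ
  intro a ha
  obtain ⟨u, v, s, dd, hiff⟩ := atom_norm a
  have hvB : vB {ν | ∀ a ∈ atoms, Asat a ν} u v ≤ dd := by
    apply vB_le ⟨w, hw⟩
    intro μ hμ
    have := (hiff μ).mp (hμ a ha)
    cases s <;> simp [ubP] at this <;> linarith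
  have hw' := (hiff w).mp (hw a ha)
  have hν' : dfr ν u v ≤ dd := le_trans (hν u v) hvB
  apply (hiff _).mpr
  unfold ubP at *
  rw [dfr_combo]
  cases s <;> simp at hw' ⊢ <;> nlinarith

lemma interp_le_limit {x y S : ℝ} (h : ∀ θ : ℝ, 0 < θ → θ ≤ 1 → θ * y + (1 - θ) * x ≤ S) :
    x ≤ S := by
  by_contra hx
  push_neg at hx
  set ε := x - S with hε
  have hε0 : 0 < ε := by simp [hε]; linarith
  set θ := min 1 (ε / (2 * (|y - x| + 1))) with hθ
  have habs : 0 ≤ |y - x| := abs_nonneg _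
  have hθ0 : 0 < θ := lt_min one_pos (by positivity)
  have hθ1 : θ ≤ 1 := min_le_left _ _
  have h2 : θ * |y - x| ≤ ε / 2 := by
    have h3 : θ ≤ ε / (2 * (|y - x| + 1)) := min_le_right _ _
    have h4 : θ * |y - x| ≤ (ε / (2 * (|y - x| + 1))) * |y - x| := by
      apply mul_le_mul_of_nonneg_right h3 habs
    have h5 : (ε / (2 * (|y - x| + 1))) * |y - x| ≤ ε / 2 := by
      rw [div_mul_eq_mul_div, div_le_div_iff₀ (by positivity) (by norm_num)]
      nlinarith
    linarith
  have h6 := h θ hθ0 hθ1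
  have h7 : θ * y + (1 - θ) * x = x + θ * (y - x) := by ring
  have h8 : -(θ * (y - x)) ≤ θ * |y - x| := by
    have habs2 : |θ * (y - x)| = θ * |y - x| := by rw [abs_mul, abs_of_pos hθ0]
    calc -(θ * (y - x)) ≤ |θ * (y - x)| := neg_le_abs _
    _ = θ * |y - x| := habs2
  linarith

/-- Sups of differences transfer between a set and a "closure-like" superset. -/
lemma vB_eq_of_dense {A B : Set (ClockT C → ℝ)} (hAB : A ⊆ B) (hA : A.Nonempty)
    (hbddB : ∀ u v, BddAbove ((fun ν => dfr ν u v) '' B))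
    (hconv : ∀ ν ∈ B, ∀ w ∈ A, ∀ θ : ℝ, 0 < θ → θ ≤ 1 →
      (fun c => θ * w c + (1 - θ) * ν c) ∈ A)
    (u v : Option (ClockT C)) : vB A u v = vB B u v := by
  obtain ⟨w, hw⟩ := id hA
  have hbddA : ∀ u v, BddAbove ((fun ν => dfr ν u v) '' A) := by
    intro u v; exact (hbddB u v).mono (Set.image_mono hAB)
  apply le_antisymm
  · exact csSup_le_csSup (hbddB u v) (hA.image _) (Set.image_mono hAB)
  · apply vB_le (⟨w, hAB hw⟩ : B.Nonempty)
    intro ν hν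
    apply interp_le_limit (y := dfr w u v)
    intro θ h0 h1
    have := le_vB hbddA (hconv ν hν w hw θ h0 h1) u v
    rwa [dfr_combo] at this

/- ### Tightening -/

/-- The tightening lemma: the canonical bounds of a zone intersected with a single
difference constraint. `H` is the constraint set (strict or non-strict version). -/
lemma tighten_core {Z H : Set (ClockT C → ℝ)} (hZ : IsZone Z)
    (hbdd : ∀ u v, BddAbove ((fun ν => dfr ν u v) '' Z))
    {a b : Option (ClockT C)} {w : ℝ}
    (hHle : ∀ ν ∈ H, dfr ν a b ≤ w)
    (hHconv : ∀ w' ∈ H, ∀ ν, dfr ν a b ≤ w → ∀ θ : ℝ, 0 < θ → θ ≤ 1 →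
      (fun c => θ * w' c + (1 - θ) * ν c) ∈ H)
    (hne : (Z ∩ H).Nonempty) (u v : Option (ClockT C)) :
    vB (Z ∩ H) u v = min (vB Z u v) (vB Z u a + w + vB Z b v) := by
  obtain ⟨ν₁, hν₁Z, hν₁H⟩ := hne
  have hZne : Z.Nonempty := ⟨ν₁, hν₁Z⟩
  set M := vB Z with hM
  have Mdiag : ∀ x, M x x = 0 := vB_diag hZne
  have Mtri : ∀ x y z, M x z ≤ M x y + M y z := fun x y z => vB_triangle hZne hbdd x y z
  have cyc : -w ≤ M b a := by
    have h1 : dfr ν₁ b a = -dfr ν₁ a b := by unfold dfr; ring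
    have h2 := hHle ν₁ hν₁H
    have := le_vB hbdd hν₁Z b a
    rw [h1] at this; linarith
  set NN : Option (ClockT C) → Option (ClockT C) → ℝ :=
    fun x y => min (M x y) (M x a + w + M b y) with hNN
  have NNle1 : ∀ x y, NN x y ≤ M x y := fun x y => min_le_left _ _
  have NNle2 : ∀ x y, NN x y ≤ M x a + w + M b y := fun x y => min_le_right _ _
  have NNtri : ∀ x y z, NN x z ≤ NN x y + NN y z := by
    intro x y z
    rcases min_cases (M x y) (M x a + w + M b y) with ⟨e1, -⟩ | ⟨e1, -⟩ <;>
      rcases min_cases (M y z) (M y a + w + M b z) with ⟨e2, -⟩ | ⟨e2, -⟩ <;>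
      rw [hNN] <;> simp only [] <;> rw [e1, e2]
    · exact le_trans (min_le_left _ _) (Mtri x y z)
    · refine le_trans (min_le_right _ _) ?_
      have := Mtri x y a; linarith
    · refine le_trans (min_le_right _ _) ?_
      have := Mtri b y z; linarith
    · refine le_trans (min_le_right _ _) ?_
      have h1 := Mtri b y a
      have : M x a + w + M b z ≤ M x a + w + M b y + (M y a + w + M b z) := by
        have := cyc; linarith
      linarith
  -- the dense closed superset
  set B : Set (ClockT C → ℝ) := {ν | (∀ x y, dfr ν x y ≤ M x y) ∧ dfr ν a b ≤ w} with hB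
  have hAB : Z ∩ H ⊆ B := by
    rintro ν ⟨h1, h2⟩
    exact ⟨fun x y => le_vB hbdd h1 x y, hHle ν h2⟩
  have hbddB : ∀ x y, BddAbove ((fun ν => dfr ν x y) '' B) := by
    intro x y
    refine ⟨M x y, ?_⟩
    rintro t ⟨ν, hν, rfl⟩
    exact hν.1 x y
  have hdense : ∀ x y, vB (Z ∩ H) x y = vB B x y := by
    intro x y
    apply vB_eq_of_dense hAB (⟨ν₁, ⟨hν₁Z, hν₁H⟩⟩ : (Z ∩ H).Nonempty) hbddB
    rintro ν hν w' ⟨hw'Z, hw'H⟩ θ h0 h1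
    constructor
    · exact zone_interp hZ hw'Z hν.1 h0 h1
    · exact hHconv w' hw'H ν hν.2 θ h0 h1
  apply le_antisymm
  · apply le_min
    · apply vB_le (⟨ν₁, ⟨hν₁Z, hν₁H⟩⟩ : (Z ∩ H).Nonempty)
      intro ν hν
      exact le_vB hbdd hν.1 u v
    · apply vB_le (⟨ν₁, ⟨hν₁Z, hν₁H⟩⟩ : (Z ∩ H).Nonempty)
      intro ν hν
      have hsplit : dfr ν u v = dfr ν u a + dfr ν a b + dfr ν b v := by unfold dfr; ring
      have h1 := le_vB hbdd hν.1 u a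
      have h2 := hHle ν hν.2
      have h3 := le_vB hbdd hν.1 b v
      linarith
  · -- construct the witness ν₀
    set ν₀ : ClockT C → ℝ := fun c => NN (some c) v - NN none v with hν₀
    have hext : ∀ x, extRef ν₀ x = NN x v - NN none v := by
      intro x
      match x with
      | none => simp [extRef]
      | some c => simp [extRef, hν₀]
    have hdfr : ∀ x y, dfr ν₀ x y = NN x v - NN y v := by
      intro x y; unfold dfr; rw [hext, hext]; ring
    have hmem : ν₀ ∈ B := by
      constructor
      · intro x y
        rw [hdfr]
        have := NNtri x y v
        have := NNle1 x y
        linarith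
      · rw [hdfr]
        have h1 := NNtri a b v
        have h2 : NN a b ≤ w := by
          have := NNle2 a b
          rw [Mdiag a, Mdiag b] at this
          linarith
        linarith
    have hvv : NN v v = 0 := by
      rw [hNN]
      simp only []
      rw [Mdiag v]
      apply min_eq_left
      have := Mtri b v a
      linarith
    have hval : dfr ν₀ u v = NN u v := by rw [hdfr, hvv]; ring
    rw [hdense u v]
    have := le_vB hbddB hmem u v
    rw [hval] at this
    exact le_trans (le_of_eq rfl) this

/-- Tightening with a non-strict constraint. -/
lemma tighten_le {Z : Set (ClockT C → ℝ)} (hZ : IsZone Z)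
    (hbdd : ∀ u v, BddAbove ((fun ν => dfr ν u v) '' Z))
    (a b : Option (ClockT C)) (w : ℝ)
    (hne : (Z ∩ {ν | dfr ν a b ≤ w}).Nonempty) (u v : Option (ClockT C)) :
    vB (Z ∩ {ν | dfr ν a b ≤ w}) u v = min (vB Z u v) (vB Z u a + w + vB Z b v) := by
  apply tighten_core hZ hbdd (fun ν hν => hν) _ hne
  intro w' hw' ν hν θ h0 h1
  have hw2 : dfr w' a b ≤ w := hw'
  show dfr _ a b ≤ w
  rw [dfr_combo]
  nlinarith

/-- Tightening with a strict constraint. -/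
lemma tighten_lt {Z : Set (ClockT C → ℝ)} (hZ : IsZone Z)
    (hbdd : ∀ u v, BddAbove ((fun ν => dfr ν u v) '' Z))
    (a b : Option (ClockT C)) (w : ℝ)
    (hne : (Z ∩ {ν | dfr ν a b < w}).Nonempty) (u v : Option (ClockT C)) :
    vB (Z ∩ {ν | dfr ν a b < w}) u v = min (vB Z u v) (vB Z u a + w + vB Z b v) := by
  apply tighten_core hZ hbdd (fun ν hν => le_of_lt hν) _ hne
  intro w' hw' ν hν θ h0 h1
  have hw2 : dfr w' a b < w := hw'
  show dfr _ a b < w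
  rw [dfr_combo]
  nlinarith

/- ### A zone is determined by its canonical bounds and their attainment -/

lemma zone_eq_of_bounds {Z₁ Z₂ : Set (ClockT C → ℝ)} (h₁ : IsZone Z₁) (h₂ : IsZone Z₂)
    (hne₁ : Z₁.Nonempty) (hne₂ : Z₂.Nonempty)
    (hbdd₁ : ∀ u v, BddAbove ((fun ν => dfr ν u v) '' Z₁))
    (hbdd₂ : ∀ u v, BddAbove ((fun ν => dfr ν u v) '' Z₂))
    (hvB : ∀ u v, vB Z₁ u v = vB Z₂ u v)
    (hAtt : ∀ u v, AttB Z₁ u v ↔ AttB Z₂ u v) : Z₁ = Z₂ := by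
  -- description of a zone in terms of its bounds
  have key : ∀ (Z : Set (ClockT C → ℝ)), IsZone Z → Z.Nonempty →
      (∀ u v, BddAbove ((fun ν => dfr ν u v) '' Z)) →
      Z = {ν | ∀ u v, dfr ν u v ≤ vB Z u v ∧ (¬ AttB Z u v → dfr ν u v < vB Z u v)} := by
    intro Z hZ hne hbdd
    ext ν
    constructor
    · intro hν
      intro u v
      refine ⟨le_vB hbdd hν u v, ?_⟩
      intro hnatt
      rcases lt_or_eq_of_le (le_vB hbdd hν u v) with h | h
      · exact h
      · exact absurd ⟨ν, hν, h⟩ hnatt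
    · intro hν
      obtain ⟨atoms, hat⟩ := isZone_iff.mp hZ
      rw [hat]
      intro a ha
      obtain ⟨u, v, s, dd, hiff⟩ := atom_norm a
      have hall : ∀ μ ∈ Z, ubP s (dfr μ u v) dd := by
        intro μ hμ
        rw [hat] at hμ
        exact (hiff μ).mp (hμ a ha)
      have hvBle : vB Z u v ≤ dd := by
        apply vB_le hne
        intro μ hμ
        have := hall μ hμ
        cases s with
        | false => simpa [ubP] using this
        | true =>
          simp only [ubP, cond_true] at this
          exact le_of_lt this
      apply (hiff ν).mpr
      obtain ⟨hle, hslt⟩ := hν u v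
      cases s with
      | false => simpa [ubP] using le_trans hle hvBle
      | true =>
        simp only [ubP, cond_true]
        rcases lt_or_eq_of_le hvBle with h | h
        · exact lt_of_le_of_lt hle h
        · have hnatt : ¬ AttB Z u v := by
            rintro ⟨μ, hμ, hμeq⟩
            have := hall μ hμ
            simp only [ubP, cond_true] at this
            rw [hμeq, h] at this
            exact lt_irrefl _ this
          have := hslt hnatt
          rw [← h]
          exact this
  have e₁ := key Z₁ h₁ hne₁ hbdd₁
  have e₂ := key Z₂ h₂ hne₂ hbdd₂
  rw [e₁, e₂]
  ext ν
  constructor <;> intro h u v <;> obtain ⟨hle, hlt⟩ := h u v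
  · rw [hvB] at hle hlt
    exact ⟨hle, fun hn => hlt (fun hA => hn ((hAtt u v).mp hA))⟩
  · rw [← hvB] at hle hlt
    exact ⟨hle, fun hn => hlt (fun hA => hn ((hAtt u v).mpr hA))⟩


/- ### Halfspaces and zones -/

/-- The index of the clock `T` in `C ⊔ {T, 0}`. -/
abbrev tId {C : Type} : Option (ClockT C) := some none

lemma halfspace_atom (u v : Option (ClockT C)) (s : Bool) (dd : ℝ) :
    ∃ a : (ClockT C × CmpOp × ℝ) ⊕ (ClockT C × ClockT C × CmpOp × ℝ),
      ∀ ν, Asat a ν ↔ ubP s (dfr ν u v) dd := by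
  match u, v with
  | some c, none =>
    cases s
    · exact ⟨.inl (c, .le, dd), fun ν => by simp [Asat, CmpOp.eval, dfr, extRef, ubP]⟩
    · exact ⟨.inl (c, .lt, dd), fun ν => by simp [Asat, CmpOp.eval, dfr, extRef, ubP]⟩
  | none, some c =>
    cases s
    · refine ⟨.inl (c, .ge, -dd), fun ν => ?_⟩
      simp only [Asat, CmpOp.eval, dfr, extRef, ubP, cond_false, ge_iff_le]
      constructor <;> intro h <;> linarith
    · refine ⟨.inl (c, .gt, -dd), fun ν => ?_⟩
      simp only [Asat, CmpOp.eval, dfr, extRef, ubP, cond_true, gt_iff_lt]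
      constructor <;> intro h <;> linarith
  | some c, some c' =>
    cases s
    · exact ⟨.inr (c, c', .le, dd), fun ν => by simp [Asat, CmpOp.eval, dfr, extRef, ubP]⟩
    · exact ⟨.inr (c, c', .lt, dd), fun ν => by simp [Asat, CmpOp.eval, dfr, extRef, ubP]⟩
  | none, none =>
    by_cases h : ubP s (0 : ℝ) dd
    · refine ⟨.inr (none, none, .le, 0), fun ν => ?_⟩
      have : dfr ν (none : Option (ClockT C)) none = 0 := by simp [dfr]
      rw [this]
      simp [Asat, CmpOp.eval, h]
    · refine ⟨.inr (none, none, .lt, 0), fun ν => ?_⟩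
      have : dfr ν (none : Option (ClockT C)) none = 0 := by simp [dfr]
      rw [this]
      simp [Asat, CmpOp.eval, h]

lemma isZone_inter_halfspace {Z : Set (ClockT C → ℝ)} (hZ : IsZone Z)
    (u v : Option (ClockT C)) (s : Bool) (dd : ℝ) :
    IsZone (Z ∩ {ν | ubP s (dfr ν u v) dd}) := by
  obtain ⟨atoms, rfl⟩ := isZone_iff.mp hZ
  obtain ⟨a, ha⟩ := halfspace_atom u v s dd
  apply isZone_iff.mpr
  refine ⟨atoms ++ [a], ?_⟩
  ext ν
  simp only [Set.mem_inter_iff, Set.mem_setOf_eq, List.mem_append, List.mem_singleton]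
  constructor
  · rintro ⟨h1, h2⟩ b hb
    rcases hb with hb | rfl
    · exact h1 b hb
    · exact (ha ν).mpr h2
  · intro h
    exact ⟨fun b hb => h b (Or.inl hb), (ha ν).mp (h a (Or.inr rfl))⟩

lemma isZone_inter_lt {Z : Set (ClockT C → ℝ)} (hZ : IsZone Z)
    (u v : Option (ClockT C)) (dd : ℝ) : IsZone (Z ∩ {ν | dfr ν u v < dd}) := by
  have := isZone_inter_halfspace hZ u v true dd
  simpa [ubP] using this

lemma isZone_inter_le {Z : Set (ClockT C → ℝ)} (hZ : IsZone Z)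
    (u v : Option (ClockT C)) (dd : ℝ) : IsZone (Z ∩ {ν | dfr ν u v ≤ dd}) := by
  have := isZone_inter_halfspace hZ u v false dd
  simpa [ubP] using this

/- ### Sup helpers -/

lemma le_csSup_of_forall_eps {S : Set ℝ} (hbdd : BddAbove S) (c : ℝ)
    (h : ∀ δ : ℝ, 0 < δ → ∃ x ∈ S, c - δ ≤ x) : c ≤ sSup S := by
  by_contra hc
  push_neg at hc
  obtain ⟨x, hx, hcx⟩ := h ((c - sSup S) / 2) (by linarith)
  have := le_csSup hbdd hx
  linarith

lemma sSup_shift {S : Set ℝ} (hne : S.Nonempty) (hbdd : BddAbove S) (a : ℝ) :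
    sSup ((fun x => a + x) '' S) = a + sSup S := by
  apply le_antisymm
  · apply csSup_le (hne.image _)
    rintro y ⟨x, hx, rfl⟩
    have := le_csSup hbdd hx
    simpa using this
  · obtain ⟨b, hb⟩ := hbdd
    have hbdd' : BddAbove ((fun x => a + x) '' S) := by
      refine ⟨a + b, ?_⟩
      rintro y ⟨x, hx, rfl⟩
      have := hb hx
      simpa using this
    apply le_csSup_of_forall_eps hbdd'
    intro δ hδ
    obtain ⟨x, hx, hlt⟩ := exists_lt_of_lt_csSup hne (show sSup S - δ < sSup S by linarith)
    exact ⟨a + x, ⟨x, hx, rfl⟩, by linarith⟩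

lemma vB_image_eq {Z₁ Z₂ : Set (ClockT C → ℝ)} {u₁ v₁ u₂ v₂ : Option (ClockT C)}
    (h : (fun ν => dfr ν u₁ v₁) '' Z₁ = (fun ν => dfr ν u₂ v₂) '' Z₂) :
    vB Z₁ u₁ v₁ = vB Z₂ u₂ v₂ := by unfold vB; rw [h]

lemma vB_image_shift {Z₁ Z₂ : Set (ClockT C → ℝ)} {u₁ v₁ u₂ v₂ : Option (ClockT C)} {a : ℝ}
    (hne : Z₂.Nonempty) (hbdd : BddAbove ((fun ν => dfr ν u₂ v₂) '' Z₂))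
    (h : (fun ν => dfr ν u₁ v₁) '' Z₁ = (fun x => a + x) '' ((fun ν => dfr ν u₂ v₂) '' Z₂)) :
    vB Z₁ u₁ v₁ = a + vB Z₂ u₂ v₂ := by
  unfold vB; rw [h]; exact sSup_shift (hne.image _) hbdd a

/- ### Exactness: reset -/

/-- Index relabelling performed by a clock reset. -/
noncomputable def rmap {C : Type} (ρ : Set C) (u : Option (ClockT C)) : Option (ClockT C) :=
  match u with
  | some (some c) => if c ∈ ρ then none else some (some c)
  | x => x

lemma extRef_reset (ν : ClockT C → ℝ) (ρ : Set C) (u : Option (ClockT C)) :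
    extRef (symResetVal ν ρ) u = extRef ν (rmap ρ u) := by
  match u with
  | none => simp [extRef, rmap]
  | some none => simp [extRef, rmap, symResetVal]
  | some (some c) =>
    by_cases h : c ∈ ρ <;> simp [extRef, rmap, symResetVal, h]

lemma dfr_reset (ν : ClockT C → ℝ) (ρ : Set C) (u v : Option (ClockT C)) :
    dfr (symResetVal ν ρ) u v = dfr ν (rmap ρ u) (rmap ρ v) := by
  unfold dfr; rw [extRef_reset, extRef_reset]

lemma vB_reset {Zg : Set (ClockT C → ℝ)} (ρ : Set C) (u v : Option (ClockT C)) :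
    vB {ν' | ∃ ν ∈ Zg, ν' = symResetVal ν ρ} u v = vB Zg (rmap ρ u) (rmap ρ v) := by
  apply vB_image_eq
  ext x
  constructor
  · rintro ⟨ν', ⟨ν, hν, rfl⟩, rfl⟩
    exact ⟨ν, hν, (dfr_reset ν ρ u v).symm⟩
  · rintro ⟨ν, hν, rfl⟩
    exact ⟨symResetVal ν ρ, ⟨ν, hν, rfl⟩, dfr_reset ν ρ u v⟩

/- ### Exactness: time elapse into a punctual stripe -/

section Elapse

variable {Z : Set (ClockT C → ℝ)}

lemma dfr_elapse (ν : ClockT C → ℝ) (τ : ℝ) (c c' : ClockT C) :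
    dfr (fun x => ν x + τ) (some c) (some c') = dfr ν (some c) (some c') := by
  simp [dfr, extRef]

lemma up_punct_VV {p : ℝ}
    (c c' : ClockT C) :
    vB (upClosure Z ∩ {ν | ν none = p}) (some c) (some c') =
      vB (Z ∩ {ν | ν none < p}) (some c) (some c') := by
  apply vB_image_eq
  ext x
  constructor
  · rintro ⟨ν', ⟨⟨ν, hν, τ, hτ, rfl⟩, hp⟩, rfl⟩
    refine ⟨ν, ⟨hν, ?_⟩, (dfr_elapse ν τ c c').symm⟩
    have : ν none + τ = p := hp
    simp only [Set.mem_setOf_eq]; linarith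
  · rintro ⟨ν, ⟨hν, hlt⟩, rfl⟩
    refine ⟨fun x => ν x + (p - ν none), ⟨⟨ν, hν, p - ν none, by simp_all, rfl⟩, ?_⟩,
      dfr_elapse ν _ c c'⟩
    show ν none + (p - ν none) = p
    ring

lemma up_punct_colRef {p : ℝ} (c : ClockT C)
    (hne : (Z ∩ {ν | ν none < p}).Nonempty)
    (hbdd : BddAbove ((fun ν => dfr ν (some c) tId) '' (Z ∩ {ν | ν none < p}))) :
    vB (upClosure Z ∩ {ν | ν none = p}) (some c) none =
      p + vB (Z ∩ {ν | ν none < p}) (some c) tId := by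
  apply vB_image_shift hne hbdd
  ext x
  constructor
  · rintro ⟨ν', ⟨⟨ν, hν, τ, hτ, rfl⟩, hp⟩, rfl⟩
    have hp' : ν none + τ = p := hp
    refine ⟨dfr ν (some c) tId, ⟨ν, ⟨hν, by simp only [Set.mem_setOf_eq]; linarith⟩, rfl⟩, ?_⟩
    simp only [dfr, extRef]
    linarith
  · rintro ⟨x, ⟨ν, ⟨hν, hlt⟩, rfl⟩, rfl⟩
    refine ⟨fun y => ν y + (p - ν none), ⟨⟨ν, hν, p - ν none, by simp_all, rfl⟩, ?_⟩, ?_⟩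
    · show ν none + (p - ν none) = p
      ring
    · simp only [dfr, extRef]
      ring

lemma up_punct_rowRef {p : ℝ} (c : ClockT C)
    (hne : (Z ∩ {ν | ν none < p}).Nonempty)
    (hbdd : BddAbove ((fun ν => dfr ν tId (some c)) '' (Z ∩ {ν | ν none < p}))) :
    vB (upClosure Z ∩ {ν | ν none = p}) none (some c) =
      vB (Z ∩ {ν | ν none < p}) tId (some c) - p := by
  rw [sub_eq_neg_add]
  apply vB_image_shift hne hbdd
  ext x
  constructor
  · rintro ⟨ν', ⟨⟨ν, hν, τ, hτ, rfl⟩, hp⟩, rfl⟩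
    have hp' : ν none + τ = p := hp
    refine ⟨dfr ν tId (some c), ⟨ν, ⟨hν, by simp only [Set.mem_setOf_eq]; linarith⟩, rfl⟩, ?_⟩
    simp only [dfr, extRef]
    linarith
  · rintro ⟨x, ⟨ν, ⟨hν, hlt⟩, rfl⟩, rfl⟩
    refine ⟨fun y => ν y + (p - ν none), ⟨⟨ν, hν, p - ν none, by simp_all, rfl⟩, ?_⟩, ?_⟩
    · show ν none + (p - ν none) = p
      ring
    · simp only [dfr, extRef]
      ring

end Elapse


section ElapseOpen

variable {Z : Set (ClockT C → ℝ)} {l u : ℝ}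

lemma up_open_VV (hlu : l < u) (c c' : ClockT C) :
    vB (upClosure Z ∩ {ν | l < ν none ∧ ν none < u}) (some c) (some c') =
      vB (Z ∩ {ν | ν none < u}) (some c) (some c') := by
  apply vB_image_eq
  ext x
  constructor
  · rintro ⟨ν', ⟨⟨ν, hν, τ, hτ, rfl⟩, hl, hu⟩, rfl⟩
    have hl' : l < ν none + τ := hl
    have hu' : ν none + τ < u := hu
    refine ⟨ν, ⟨hν, ?_⟩, (dfr_elapse ν τ c c').symm⟩
    show ν none < u
    linarith
  · rintro ⟨ν, ⟨hν, hlt⟩, rfl⟩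
    have hlt' : ν none < u := hlt
    set m := max l (ν none) with hm
    have hm1 : l ≤ m := le_max_left _ _
    have hm2 : ν none ≤ m := le_max_right _ _
    have hm3 : m < u := max_lt hlu hlt'
    refine ⟨fun y => ν y + ((m + u) / 2 - ν none),
      ⟨⟨ν, hν, (m + u) / 2 - ν none, by linarith, rfl⟩, ?_, ?_⟩, dfr_elapse ν _ c c'⟩
    · show l < ν none + ((m + u) / 2 - ν none)
      linarith
    · show ν none + ((m + u) / 2 - ν none) < u
      linarith

lemma up_open_colRef (hlu : l < u) (c : ClockT C)
    (hne : (Z ∩ {ν | ν none < u}).Nonempty)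
    (hbddF : BddAbove ((fun ν => dfr ν (some c) tId) '' (Z ∩ {ν | ν none < u})))
    (hbddZ' : BddAbove ((fun ν => dfr ν (some c) none) ''
      (upClosure Z ∩ {ν | l < ν none ∧ ν none < u})))
    (hneZ' : (upClosure Z ∩ {ν | l < ν none ∧ ν none < u}).Nonempty) :
    vB (upClosure Z ∩ {ν | l < ν none ∧ ν none < u}) (some c) none =
      u + vB (Z ∩ {ν | ν none < u}) (some c) tId := by
  apply le_antisymm
  · apply vB_le hneZ'
    rintro ν' ⟨⟨ν, hν, τ, hτ, rfl⟩, hl, hu⟩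
    have hu' : ν none + τ < u := hu
    have hF : ν ∈ Z ∩ {ν | ν none < u} := ⟨hν, by show ν none < u; linarith⟩
    have h2 : dfr ν (some c) tId ≤ vB (Z ∩ {ν | ν none < u}) (some c) tId :=
      le_csSup hbddF ⟨ν, hF, rfl⟩
    show (fun x => ν x + τ) c - 0 ≤ _
    have : dfr ν (some c) tId = ν c - ν none := by simp [dfr, extRef]
    simp only []
    linarith
  · apply le_csSup_of_forall_eps hbddZ'
    intro δ hδ
    obtain ⟨y, ⟨ν, hF, rfl⟩, hy⟩ := exists_lt_of_lt_csSup (hne.image _)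
      (show vB (Z ∩ {ν | ν none < u}) (some c) tId - δ / 2 <
        vB (Z ∩ {ν | ν none < u}) (some c) tId by linarith)
    obtain ⟨hνZ, hνu⟩ := hF
    have hνu' : ν none < u := hνu
    set m := max (max l (ν none)) (u - δ / 2) with hm
    have hm1 : l ≤ m := le_trans (le_max_left _ _) (le_max_left _ _)
    have hm2 : ν none ≤ m := le_trans (le_max_right _ _) (le_max_left _ _)
    have hm4 : u - δ / 2 ≤ m := le_max_right _ _
    have hm3 : m < u := max_lt (max_lt hlu hνu') (by linarith)
    refine ⟨dfr (fun y => ν y + ((m + u) / 2 - ν none)) (some c) none,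
      ⟨fun y => ν y + ((m + u) / 2 - ν none),
        ⟨⟨ν, hνZ, (m + u) / 2 - ν none, by linarith, rfl⟩,
         by show l < ν none + ((m + u) / 2 - ν none); linarith,
         by show ν none + ((m + u) / 2 - ν none) < u; linarith⟩, rfl⟩, ?_⟩
    have he : dfr (fun y => ν y + ((m + u) / 2 - ν none)) (some c) none
        = (ν c - ν none) + (m + u) / 2 := by
      simp [dfr, extRef]; ring
    have hy' : ν c - ν none > vB (Z ∩ {ν | ν none < u}) (some c) tId - δ / 2 := by
      have : dfr ν (some c) tId = ν c - ν none := by simp [dfr, extRef]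
      linarith [hy, this.symm.le]
    rw [he]
    linarith

lemma up_open_rowRef_lo (hlu : l < u) (c : ClockT C)
    (hZl : ∀ ν ∈ Z, ν none ≤ l)
    (hne : (Z ∩ {ν | ν none < u}).Nonempty)
    (hbddF : BddAbove ((fun ν => dfr ν tId (some c)) '' (Z ∩ {ν | ν none < u})))
    (hbddZ' : BddAbove ((fun ν => dfr ν none (some c)) ''
      (upClosure Z ∩ {ν | l < ν none ∧ ν none < u})))
    (hneZ' : (upClosure Z ∩ {ν | l < ν none ∧ ν none < u}).Nonempty) :
    vB (upClosure Z ∩ {ν | l < ν none ∧ ν none < u}) none (some c) =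
      vB (Z ∩ {ν | ν none < u}) tId (some c) - l := by
  apply le_antisymm
  · apply vB_le hneZ'
    rintro ν' ⟨⟨ν, hν, τ, hτ, rfl⟩, hl, hu⟩
    have hl' : l < ν none + τ := hl
    have hu' : ν none + τ < u := hu
    have hF : ν ∈ Z ∩ {ν | ν none < u} := ⟨hν, by show ν none < u; linarith⟩
    have h2 : dfr ν tId (some c) ≤ vB (Z ∩ {ν | ν none < u}) tId (some c) :=
      le_csSup hbddF ⟨ν, hF, rfl⟩
    have he : dfr (fun x => ν x + τ) none (some c) = (ν none - ν c) - (ν none + τ) := by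
      simp [dfr, extRef]; ring
    have he2 : dfr ν tId (some c) = ν none - ν c := by simp [dfr, extRef]
    rw [he]
    linarith
  · apply le_csSup_of_forall_eps hbddZ'
    intro δ hδ
    obtain ⟨y, ⟨ν, hF, rfl⟩, hy⟩ := exists_lt_of_lt_csSup (hne.image _)
      (show vB (Z ∩ {ν | ν none < u}) tId (some c) - δ / 2 <
        vB (Z ∩ {ν | ν none < u}) tId (some c) by linarith)
    obtain ⟨hνZ, hνu⟩ := hF
    set ζ := min (δ / 2) ((u - l) / 2) with hζ
    have hζ0 : 0 < ζ := lt_min (by linarith) (by linarith)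
    have hζ1 : ζ ≤ δ / 2 := min_le_left _ _
    have hζ2 : ζ ≤ (u - l) / 2 := min_le_right _ _
    have hνl : ν none ≤ l := hZl ν hνZ
    refine ⟨dfr (fun y => ν y + (l + ζ - ν none)) none (some c),
      ⟨fun y => ν y + (l + ζ - ν none),
        ⟨⟨ν, hνZ, l + ζ - ν none, by linarith, rfl⟩,
         by show l < ν none + (l + ζ - ν none); linarith,
         by show ν none + (l + ζ - ν none) < u; linarith⟩, rfl⟩, ?_⟩
    have he : dfr (fun y => ν y + (l + ζ - ν none)) none (some c)
        = (ν none - ν c) - (l + ζ) := by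
      simp [dfr, extRef]; ring
    have he2 : dfr ν tId (some c) = ν none - ν c := by simp [dfr, extRef]
    rw [he]
    simp only [he2] at hy
    linarith

lemma up_open_rowRef_same (hlu : l < u) (c : ClockT C)
    (hZl : ∀ ν ∈ Z, l < ν none)
    (hne : (Z ∩ {ν | ν none < u}).Nonempty)
    (hbddF : BddAbove ((fun ν => dfr ν none (some c)) '' (Z ∩ {ν | ν none < u})))
    (hbddZ' : BddAbove ((fun ν => dfr ν none (some c)) ''
      (upClosure Z ∩ {ν | l < ν none ∧ ν none < u})))
    (hneZ' : (upClosure Z ∩ {ν | l < ν none ∧ ν none < u}).Nonempty) :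
    vB (upClosure Z ∩ {ν | l < ν none ∧ ν none < u}) none (some c) =
      vB (Z ∩ {ν | ν none < u}) none (some c) := by
  apply le_antisymm
  · apply vB_le hneZ'
    rintro ν' ⟨⟨ν, hν, τ, hτ, rfl⟩, hl, hu⟩
    have hu' : ν none + τ < u := hu
    have hF : ν ∈ Z ∩ {ν | ν none < u} := ⟨hν, by show ν none < u; linarith⟩
    have h2 : dfr ν none (some c) ≤ vB (Z ∩ {ν | ν none < u}) none (some c) :=
      le_csSup hbddF ⟨ν, hF, rfl⟩
    have he : dfr (fun x => ν x + τ) none (some c) = (0 - ν c) - τ := by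
      simp [dfr, extRef]; ring
    have he2 : dfr ν none (some c) = 0 - ν c := by simp [dfr, extRef]
    rw [he]
    rw [he2] at h2
    linarith
  · apply le_csSup_of_forall_eps hbddZ'
    intro δ hδ
    obtain ⟨y, ⟨ν, hF, rfl⟩, hy⟩ := exists_lt_of_lt_csSup (hne.image _)
      (show vB (Z ∩ {ν | ν none < u}) none (some c) - δ / 2 <
        vB (Z ∩ {ν | ν none < u}) none (some c) by linarith)
    obtain ⟨hνZ, hνu⟩ := hF
    have hνu' : ν none < u := hνu
    set ζ := min (δ / 2) ((u - ν none) / 2) with hζ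
    have hζ0 : 0 < ζ := lt_min (by linarith) (by linarith)
    have hζ1 : ζ ≤ δ / 2 := min_le_left _ _
    have hζ2 : ζ ≤ (u - ν none) / 2 := min_le_right _ _
    have hνl : l < ν none := hZl ν hνZ
    refine ⟨dfr (fun y => ν y + ζ) none (some c),
      ⟨fun y => ν y + ζ,
        ⟨⟨ν, hνZ, ζ, hζ0, rfl⟩,
         by show l < ν none + ζ; linarith,
         by show ν none + ζ < u; linarith⟩, rfl⟩, ?_⟩
    have he : dfr (fun y => ν y + ζ) none (some c) = (0 - ν c) - ζ := by
      simp [dfr, extRef]; ring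
    have he2 : dfr ν none (some c) = 0 - ν c := by simp [dfr, extRef]
    rw [he]
    simp only [he2] at hy
    linarith

end ElapseOpen


/- ### Canonical-bound invariants -/

/-- Column-`T` form: `k - pref j`. -/
def QZf (σ : Signal X) (x : ℝ) : Prop := ∃ k : ℤ, ∃ j ≤ σ.len, x = (k : ℝ) - σ.pref j

/-- Row-`T` form: `pref j + k`. -/
def PZf (σ : Signal X) (x : ℝ) : Prop := ∃ k : ℤ, ∃ j ≤ σ.len, x = σ.pref j + (k : ℝ)

/-- The inductive invariant on the zone of a reachable symbolic state. -/
structure VInv (σ : Signal X) (Z : Set (ClockT C → ℝ)) : Prop where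
  zone : IsZone Z
  ne : Z.Nonempty
  box : BoxB σ.dur Z
  colT : ∀ u, QZf σ (vB Z u tId)
  rowT : ∀ v, PZf σ (vB Z tId v)
  star : ∀ u v, vB Z u v = vB Z u tId + vB Z tId v ∨ ∃ k : ℤ, vB Z u v = (k : ℝ)

section Algebra

variable {σ : Signal X} {Z Z' : Set (ClockT C → ℝ)}

/-- Facts common to all update lemmas. -/
lemma VInv.bdd (hI : VInv σ Z) :
    ∀ u v, BddAbove ((fun ν => dfr ν u v) '' Z) :=
  box_bddAbove (dur_nonneg σ) hI.box

lemma VInv.tri (hI : VInv σ Z) (x y z : Option (ClockT C)) :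
    vB Z x z ≤ vB Z x y + vB Z y z := vB_triangle hI.ne hI.bdd x y z

lemma VInv.diag (hI : VInv σ Z) (x : Option (ClockT C)) : vB Z x x = 0 :=
  vB_diag hI.ne x

/-- Update along an upper bound on `T` (`T ⋖ w`). -/
lemma VInv_upperT (hI : VInv σ Z)
    (hz' : IsZone Z') (hne' : Z'.Nonempty) (hbox' : BoxB σ.dur Z')
    {w : ℝ} {j : ℕ} (hj : j ≤ σ.len) (hw : w = σ.pref j)
    (hwit : ∃ ν ∈ Z, dfr ν tId none ≤ w)
    (hform : ∀ u v, vB Z' u v = min (vB Z u v) (vB Z u tId + w + vB Z none v)) :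
    VInv σ Z' := by
  have Nbdd : ∀ u v, BddAbove ((fun ν => dfr ν u v) '' Z') :=
    box_bddAbove (dur_nonneg σ) hbox'
  have Ntri : ∀ x y z, (vB Z') x z ≤ (vB Z') x y + (vB Z') y z := fun x y z => vB_triangle hne' Nbdd x y z
  have cyc : 0 ≤ w + (vB Z) none tId := by
    obtain ⟨ν, hν, hle⟩ := hwit
    have h1 : dfr ν none tId = -dfr ν tId none := by unfold dfr; ring
    have h2 := le_vB hI.bdd hν none tId
    rw [h1] at h2
    linarith
  have hcolT : ∀ u, (vB Z') u tId = (vB Z) u tId := by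
    intro u
    rw [hform u tId]
    apply min_eq_left
    have := hI.tri u tId none
    nlinarith [hI.tri u tId none, cyc]
  have hrowT : ∀ v, (vB Z') tId v ≤ (vB Z) tId v := by
    intro v
    rw [hform tId v]; exact min_le_left _ _
  refine ⟨hz', hne', hbox', ?_, ?_, ?_⟩
  · intro u; rw [hcolT u]; exact hI.colT u
  · intro v
    rw [hform tId v, hI.diag tId]
    rcases min_cases ((vB Z) tId v) (0 + w + (vB Z) none v) with ⟨he, -⟩ | ⟨he, hle⟩ <;> rw [he]
    · exact hI.rowT v
    · rcases hI.star none v with hs | ⟨k, hk⟩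
      · -- (vB Z) none v = (vB Z) none tId + (vB Z) tId v forces the other branch
        exfalso
        rw [hs] at hle
        nlinarith
      · rw [hk, hw]
        exact ⟨k, j, hj, by ring⟩
  · intro u v
    rw [hform u v]
    rcases min_cases ((vB Z) u v) ((vB Z) u tId + w + (vB Z) none v) with ⟨he, hle⟩ | ⟨he, hle⟩ <;> rw [he]
    · rcases hI.star u v with hs | ⟨k, hk⟩
      · left
        have h1 : (vB Z') u tId = (vB Z) u tId := hcolT u
        have h2 : (vB Z') tId v ≤ (vB Z) tId v := hrowT v
        have h3 : (vB Z') u v ≤ (vB Z') u tId + (vB Z') tId v := Ntri u tId v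
        rw [hform u v, he] at h3
        have h4 : (vB Z') u tId + (vB Z') tId v ≤ (vB Z) u v := by rw [h1, hs]; linarith
        show (vB Z) u v = (vB Z') u tId + (vB Z') tId v
        linarith
      · right; exact ⟨k, hk⟩
    · left
      have h1 : (vB Z') u tId = (vB Z) u tId := hcolT u
      have h3 : (vB Z') u v ≤ (vB Z') u tId + (vB Z') tId v := Ntri u tId v
      rw [hform u v, he] at h3
      have h2 : (vB Z') tId v ≤ 0 + w + (vB Z) none v := by
        rw [hform tId v, hI.diag tId]; exact min_le_right _ _
      have h4 : (vB Z') u tId + (vB Z') tId v ≤ (vB Z) u tId + w + (vB Z) none v := by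
        rw [h1]; linarith
      show (vB Z) u tId + w + (vB Z) none v = (vB Z') u tId + (vB Z') tId v
      linarith

/-- Update along an upper bound on a clock (`a ⋖ w`, `w` an integer). -/
lemma VInv_upperClock (hI : VInv σ Z)
    (hz' : IsZone Z') (hne' : Z'.Nonempty) (hbox' : BoxB σ.dur Z')
    {a : ClockT C} {w : ℝ} {kw : ℤ} (hw : w = (kw : ℝ))
    (hwit : ∃ ν ∈ Z, dfr ν (some a) none ≤ w)
    (hform : ∀ u v, vB Z' u v = min (vB Z u v) (vB Z u (some a) + w + vB Z none v)) :
    VInv σ Z' := by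
  have Nbdd : ∀ u v, BddAbove ((fun ν => dfr ν u v) '' Z') :=
    box_bddAbove (dur_nonneg σ) hbox'
  have Ntri : ∀ x y z, (vB Z') x z ≤ (vB Z') x y + (vB Z') y z := fun x y z => vB_triangle hne' Nbdd x y z
  obtain ⟨ν, hν, hle⟩ := hwit
  have cyc2 : 0 ≤ (vB Z) tId (some a) + w + (vB Z) none tId := by
    have e1 := le_vB hI.bdd hν tId (some a)
    have e2 := le_vB hI.bdd hν none tId
    have : dfr ν tId (some a) + dfr ν (some a) none + dfr ν none tId = 0 := by
      unfold dfr; ring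
    linarith
  have hcolT : ∀ u, QZf σ ((vB Z') u tId) := by
    intro u
    rw [hform u tId]
    rcases min_cases ((vB Z) u tId) ((vB Z) u (some a) + w + (vB Z) none tId) with ⟨he, -⟩ | ⟨he, hle2⟩ <;>
      rw [he]
    · exact hI.colT u
    · rcases hI.star u (some a) with hs | ⟨k1, hk1⟩
      · have : (vB Z) u tId ≤ (vB Z) u (some a) + w + (vB Z) none tId := by rw [hs]; linarith
        have : (vB Z) u (some a) + w + (vB Z) none tId = (vB Z) u tId := le_antisymm (le_of_lt hle2) this
        rw [this]; exact hI.colT u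
      · obtain ⟨k2, j2, hj2, hk2⟩ := hI.colT (none : Option (ClockT C))
        refine ⟨k1 + kw + k2, j2, hj2, ?_⟩
        rw [hk1, hw, hk2]
        push_cast
        ring
  have hrowT : ∀ v, PZf σ ((vB Z') tId v) := by
    intro v
    rw [hform tId v]
    rcases min_cases ((vB Z) tId v) ((vB Z) tId (some a) + w + (vB Z) none v) with ⟨he, -⟩ | ⟨he, hle2⟩ <;>
      rw [he]
    · exact hI.rowT v
    · rcases hI.star none v with hs | ⟨k2, hk2⟩
      · have : (vB Z) tId v ≤ (vB Z) tId (some a) + w + (vB Z) none v := by rw [hs]; linarith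
        have heq : (vB Z) tId (some a) + w + (vB Z) none v = (vB Z) tId v := le_antisymm (le_of_lt hle2) this
        rw [heq]; exact hI.rowT v
      · obtain ⟨k1, j1, hj1, hk1⟩ := hI.rowT (some a)
        refine ⟨k1 + kw + k2, j1, hj1, ?_⟩
        rw [hk1, hw, hk2]
        push_cast
        ring
  refine ⟨hz', hne', hbox', hcolT, hrowT, ?_⟩
  intro u v
  have hNuT : (vB Z') u tId ≤ (vB Z) u tId := by rw [hform u tId]; exact min_le_left _ _
  have hNuT2 : (vB Z') u tId ≤ (vB Z) u (some a) + w + (vB Z) none tId := by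
    rw [hform u tId]; exact min_le_right _ _
  have hNTv : (vB Z') tId v ≤ (vB Z) tId v := by rw [hform tId v]; exact min_le_left _ _
  have hNTv2 : (vB Z') tId v ≤ (vB Z) tId (some a) + w + (vB Z) none v := by
    rw [hform tId v]; exact min_le_right _ _
  have h3 : (vB Z') u v ≤ (vB Z') u tId + (vB Z') tId v := Ntri u tId v
  rw [hform u v]
  rcases min_cases ((vB Z) u v) ((vB Z) u (some a) + w + (vB Z) none v) with ⟨he, hle2⟩ | ⟨he, hle2⟩ <;>
    rw [he] <;> rw [hform u v, he] at h3
  · rcases hI.star u v with hs | ⟨k, hk⟩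
    · left
      have h4 : (vB Z') u tId + (vB Z') tId v ≤ (vB Z) u v := by rw [hs]; linarith
      linarith
    · right; exact ⟨k, hk⟩
  · rcases hI.star u (some a) with hs | ⟨k1, hk1⟩
    · left
      have h4 : (vB Z') u tId + (vB Z') tId v ≤ (vB Z) u (some a) + w + (vB Z) none v := by
        rw [hs] at *
        linarith
      linarith
    · rcases hI.star none v with hs2 | ⟨k2, hk2⟩
      · left
        have h4 : (vB Z') u tId + (vB Z') tId v ≤ (vB Z) u (some a) + w + (vB Z) none v := by
          rw [hs2]
          linarith
        linarith
      · right
        exact ⟨k1 + kw + k2, by rw [hk1, hw, hk2]; push_cast; ring⟩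

/-- Update along a lower bound on `T` (`T ⋗`, i.e. `dfr none T ≤ w`). -/
lemma VInv_lowerT (hI : VInv σ Z)
    (hz' : IsZone Z') (hne' : Z'.Nonempty) (hbox' : BoxB σ.dur Z')
    {w : ℝ} {j : ℕ} (hj : j ≤ σ.len) (hw : w = -σ.pref j)
    (hwit : ∃ ν ∈ Z, dfr ν none tId ≤ w)
    (hform : ∀ u v, vB Z' u v = min (vB Z u v) (vB Z u none + w + vB Z tId v)) :
    VInv σ Z' := by
  have Nbdd : ∀ u v, BddAbove ((fun ν => dfr ν u v) '' Z') :=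
    box_bddAbove (dur_nonneg σ) hbox'
  have Ntri : ∀ x y z, (vB Z') x z ≤ (vB Z') x y + (vB Z') y z := fun x y z => vB_triangle hne' Nbdd x y z
  have cyc : 0 ≤ (vB Z) tId none + w := by
    obtain ⟨ν, hν, hle⟩ := hwit
    have h1 : dfr ν tId none = -dfr ν none tId := by unfold dfr; ring
    have h2 := le_vB hI.bdd hν tId none
    rw [h1] at h2
    linarith
  have hrowT : ∀ v, (vB Z') tId v = (vB Z) tId v := by
    intro v
    rw [hform tId v]
    apply min_eq_left
    nlinarith [hI.tri tId none v, cyc]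
  have hcolT : ∀ u, QZf σ ((vB Z') u tId) := by
    intro u
    rw [hform u tId, hI.diag tId]
    rcases min_cases ((vB Z) u tId) ((vB Z) u none + w + 0) with ⟨he, -⟩ | ⟨he, hle2⟩ <;> rw [he]
    · exact hI.colT u
    · rcases hI.star u none with hs | ⟨k, hk⟩
      · have : (vB Z) u tId ≤ (vB Z) u none + w + 0 := by rw [hs]; linarith
        have heq : (vB Z) u none + w + 0 = (vB Z) u tId := le_antisymm (le_of_lt hle2) this
        rw [heq]; exact hI.colT u
      · exact ⟨k, j, hj, by rw [hk, hw]; ring⟩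
  refine ⟨hz', hne', hbox', hcolT, ?_, ?_⟩
  · intro v; rw [hrowT v]; exact hI.rowT v
  · intro u v
    have hNuT : (vB Z') u tId ≤ (vB Z) u tId := by rw [hform u tId]; exact min_le_left _ _
    have hNuT2 : (vB Z') u tId ≤ (vB Z) u none + w + 0 := by
      rw [hform u tId, hI.diag tId]; exact min_le_right _ _
    have h3 : (vB Z') u v ≤ (vB Z') u tId + (vB Z') tId v := Ntri u tId v
    rw [hform u v]
    rcases min_cases ((vB Z) u v) ((vB Z) u none + w + (vB Z) tId v) with ⟨he, hle2⟩ | ⟨he, hle2⟩ <;>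
      rw [he] <;> rw [hform u v, he] at h3
    · rcases hI.star u v with hs | ⟨k, hk⟩
      · left
        have h4 : (vB Z') u tId + (vB Z') tId v ≤ (vB Z) u v := by rw [hs, hrowT v]; linarith
        linarith
      · right; exact ⟨k, hk⟩
    · rcases hI.star u none with hs | ⟨k1, hk1⟩
      · left
        have h4 : (vB Z') u tId + (vB Z') tId v ≤ (vB Z) u none + w + (vB Z) tId v := by
          rw [hrowT v, hs]
          linarith [cyc, hNuT]
        linarith
      · left
        have h4 : (vB Z') u tId + (vB Z') tId v ≤ (vB Z) u none + w + (vB Z) tId v := by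
          rw [hrowT v]
          linarith [hNuT2]
        linarith

/-- Update along a lower bound on a clock (`dfr none a ≤ w`, `w` an integer). -/
lemma VInv_lowerClock (hI : VInv σ Z)
    (hz' : IsZone Z') (hne' : Z'.Nonempty) (hbox' : BoxB σ.dur Z')
    {a : ClockT C} {w : ℝ} {kw : ℤ} (hw : w = (kw : ℝ))
    (hwit : ∃ ν ∈ Z, dfr ν none (some a) ≤ w)
    (hform : ∀ u v, vB Z' u v = min (vB Z u v) (vB Z u none + w + vB Z (some a) v)) :
    VInv σ Z' := by
  have Nbdd : ∀ u v, BddAbove ((fun ν => dfr ν u v) '' Z') :=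
    box_bddAbove (dur_nonneg σ) hbox'
  have Ntri : ∀ x y z, (vB Z') x z ≤ (vB Z') x y + (vB Z') y z := fun x y z => vB_triangle hne' Nbdd x y z
  obtain ⟨ν, hν, hle⟩ := hwit
  have cyc3 : 0 ≤ (vB Z) tId none + w + (vB Z) (some a) tId := by
    have e1 := le_vB hI.bdd hν tId none
    have e2 := le_vB hI.bdd hν (some a) tId
    have : dfr ν tId none + dfr ν none (some a) + dfr ν (some a) tId = 0 := by
      unfold dfr; ring
    linarith
  have hcolT : ∀ u, QZf σ ((vB Z') u tId) := by
    intro u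
    rw [hform u tId]
    rcases min_cases ((vB Z) u tId) ((vB Z) u none + w + (vB Z) (some a) tId) with ⟨he, -⟩ | ⟨he, hle2⟩ <;>
      rw [he]
    · exact hI.colT u
    · rcases hI.star u none with hs | ⟨k1, hk1⟩
      · have : (vB Z) u tId ≤ (vB Z) u none + w + (vB Z) (some a) tId := by rw [hs]; linarith
        have heq : (vB Z) u none + w + (vB Z) (some a) tId = (vB Z) u tId := le_antisymm (le_of_lt hle2) this
        rw [heq]; exact hI.colT u
      · obtain ⟨k2, j2, hj2, hk2⟩ := hI.colT (some a)
        refine ⟨k1 + kw + k2, j2, hj2, ?_⟩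
        rw [hk1, hw, hk2]
        push_cast
        ring
  have hrowT : ∀ v, PZf σ ((vB Z') tId v) := by
    intro v
    rw [hform tId v]
    rcases min_cases ((vB Z) tId v) ((vB Z) tId none + w + (vB Z) (some a) v) with ⟨he, -⟩ | ⟨he, hle2⟩ <;>
      rw [he]
    · exact hI.rowT v
    · rcases hI.star (some a) v with hs | ⟨k2, hk2⟩
      · have : (vB Z) tId v ≤ (vB Z) tId none + w + (vB Z) (some a) v := by rw [hs]; linarith
        have heq : (vB Z) tId none + w + (vB Z) (some a) v = (vB Z) tId v := le_antisymm (le_of_lt hle2) this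
        rw [heq]; exact hI.rowT v
      · obtain ⟨k1, j1, hj1, hk1⟩ := hI.rowT (none : Option (ClockT C))
        refine ⟨k1 + kw + k2, j1, hj1, ?_⟩
        rw [hk1, hw, hk2]
        push_cast
        ring
  refine ⟨hz', hne', hbox', hcolT, hrowT, ?_⟩
  intro u v
  have hNuT : (vB Z') u tId ≤ (vB Z) u tId := by rw [hform u tId]; exact min_le_left _ _
  have hNuT2 : (vB Z') u tId ≤ (vB Z) u none + w + (vB Z) (some a) tId := by
    rw [hform u tId]; exact min_le_right _ _
  have hNTv : (vB Z') tId v ≤ (vB Z) tId v := by rw [hform tId v]; exact min_le_left _ _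
  have hNTv2 : (vB Z') tId v ≤ (vB Z) tId none + w + (vB Z) (some a) v := by
    rw [hform tId v]; exact min_le_right _ _
  have h3 : (vB Z') u v ≤ (vB Z') u tId + (vB Z') tId v := Ntri u tId v
  rw [hform u v]
  rcases min_cases ((vB Z) u v) ((vB Z) u none + w + (vB Z) (some a) v) with ⟨he, hle2⟩ | ⟨he, hle2⟩ <;>
    rw [he] <;> rw [hform u v, he] at h3
  · rcases hI.star u v with hs | ⟨k, hk⟩
    · left
      have h4 : (vB Z') u tId + (vB Z') tId v ≤ (vB Z) u v := by rw [hs]; linarith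
      linarith
    · right; exact ⟨k, hk⟩
  · rcases hI.star u none with hs | ⟨k1, hk1⟩
    · left
      have h4 : (vB Z') u tId + (vB Z') tId v ≤ (vB Z) u none + w + (vB Z) (some a) v := by
        rw [hs]
        linarith [hNuT, hNTv2]
      linarith
    · rcases hI.star (some a) v with hs2 | ⟨k2, hk2⟩
      · left
        have h4 : (vB Z') u tId + (vB Z') tId v ≤ (vB Z) u none + w + (vB Z) (some a) v := by
          rw [hk1] at hNuT2
          rw [hs2]
          linarith
        linarith
      · right
        exact ⟨k1 + kw + k2, by rw [hk1, hw, hk2]; push_cast; ring⟩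

end Algebra


section ElapseAssemble

variable {σ : Signal X} {F Z' : Set (ClockT C → ℝ)}

/-- Assembly of the invariant after a time elapse into a punctual stripe. -/
lemma VInv_punct (hP : VInv σ F)
    (hz' : IsZone Z') (hne' : Z'.Nonempty) (hbox' : BoxB σ.dur Z')
    {p : ℝ} {i : ℕ} (hi : i ≤ σ.len) (hp : p = σ.pref i)
    (h1 : ∀ c c' : ClockT C, vB Z' (some c) (some c') = vB F (some c) (some c'))
    (h2 : ∀ c : ClockT C, vB Z' (some c) none = p + vB F (some c) tId)
    (h3 : ∀ c : ClockT C, vB Z' none (some c) = vB F tId (some c) - p) :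
    VInv σ Z' := by
  have hdiagF : vB F tId tId = 0 := hP.diag tId
  have hdiagZ' : vB Z' none none = 0 := vB_diag hne' none
  refine ⟨hz', hne', hbox', ?_, ?_, ?_⟩
  · intro u
    match u with
    | some c => rw [h1 c none]; exact hP.colT (some c)
    | none =>
      rw [h3 none, hdiagF]
      exact ⟨0, i, hi, by rw [hp]; push_cast; ring⟩
  · intro v
    match v with
    | some c => rw [h1 none c]; exact hP.rowT (some c)
    | none =>
      rw [h2 none, hdiagF]
      exact ⟨0, i, hi, by rw [hp]; push_cast; ring⟩
  · intro u v
    match u, v with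
    | some c, some c' =>
      rw [h1 c c', h1 c none, h1 none c']
      exact hP.star (some c) (some c')
    | some c, none =>
      left
      rw [h2 c, h1 c none, h2 none, hdiagF]
      ring
    | none, some c =>
      left
      rw [h3 c, h3 none, hdiagF, h1 none c]
      ring
    | none, none =>
      right
      exact ⟨0, by rw [hdiagZ']; norm_num⟩

/-- Assembly after a time elapse into a later open stripe. -/
lemma VInv_open_lo (hP : VInv σ F)
    (hz' : IsZone Z') (hne' : Z'.Nonempty) (hbox' : BoxB σ.dur Z')
    {l u : ℝ} {i : ℕ} (hi1 : 1 ≤ i) (hi : i ≤ σ.len)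
    (hl : l = σ.pref (i - 1)) (hu : u = σ.pref i)
    (h1 : ∀ c c' : ClockT C, vB Z' (some c) (some c') = vB F (some c) (some c'))
    (h2 : ∀ c : ClockT C, vB Z' (some c) none = u + vB F (some c) tId)
    (h3 : ∀ c : ClockT C, vB Z' none (some c) = vB F tId (some c) - l) :
    VInv σ Z' := by
  have hdiagF : vB F tId tId = 0 := hP.diag tId
  have hdiagZ' : vB Z' none none = 0 := vB_diag hne' none
  refine ⟨hz', hne', hbox', ?_, ?_, ?_⟩
  · intro u'
    match u' with
    | some c => rw [h1 c none]; exact hP.colT (some c)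
    | none =>
      rw [h3 none, hdiagF]
      exact ⟨0, i - 1, le_trans (Nat.sub_le _ _) hi, by rw [hl]; push_cast; ring⟩
  · intro v
    match v with
    | some c => rw [h1 none c]; exact hP.rowT (some c)
    | none =>
      rw [h2 none, hdiagF]
      exact ⟨0, i, hi, by rw [hu]; push_cast; ring⟩
  · intro u' v
    match u', v with
    | some c, some c' =>
      rw [h1 c c', h1 c none, h1 none c']
      exact hP.star (some c) (some c')
    | some c, none =>
      left
      rw [h2 c, h1 c none, h2 none, hdiagF]
      ring
    | none, some c =>
      left
      rw [h3 c, h3 none, hdiagF, h1 none c]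
      ring
    | none, none =>
      right
      exact ⟨0, by rw [hdiagZ']; norm_num⟩

/-- Assembly after a time elapse within the same open stripe. -/
lemma VInv_open_same (hP : VInv σ F)
    (hz' : IsZone Z') (hne' : Z'.Nonempty) (hbox' : BoxB σ.dur Z')
    {u : ℝ} {i : ℕ} (hi : i ≤ σ.len) (hu : u = σ.pref i)
    (h1 : ∀ c c' : ClockT C, vB Z' (some c) (some c') = vB F (some c) (some c'))
    (h2 : ∀ c : ClockT C, vB Z' (some c) none = u + vB F (some c) tId)
    (h3 : ∀ c : ClockT C, vB Z' none (some c) = vB F none (some c)) :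
    VInv σ Z' := by
  have hdiagF : vB F tId tId = 0 := hP.diag tId
  have hdiagZ' : vB Z' none none = 0 := vB_diag hne' none
  refine ⟨hz', hne', hbox', ?_, ?_, ?_⟩
  · intro u'
    match u' with
    | some c => rw [h1 c none]; exact hP.colT (some c)
    | none => rw [h3 none]; exact hP.colT none
  · intro v
    match v with
    | some c => rw [h1 none c]; exact hP.rowT (some c)
    | none =>
      rw [h2 none, hdiagF]
      exact ⟨0, i, hi, by rw [hu]; push_cast; ring⟩
  · intro u' v
    match u', v with
    | some c, some c' =>
      rw [h1 c c', h1 c none, h1 none c']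
      exact hP.star (some c) (some c')
    | some c, none =>
      left
      rw [h2 c, h1 c none, h2 none, hdiagF]
      ring
    | none, some c =>
      rw [h3 c, h3 none, h1 none c]
      exact hP.star none (some c)
    | none, none =>
      right
      exact ⟨0, by rw [hdiagZ']; norm_num⟩

end ElapseAssemble


section ResetGuard

variable {σ : Signal X} {Z Zg Z' : Set (ClockT C → ℝ)}

lemma rmap_tId (ρ : Set C) : rmap ρ (tId : Option (ClockT C)) = tId := rfl

lemma VInv_reset (hG : VInv σ Zg)
    (hz' : IsZone Z') (hne' : Z'.Nonempty) (hbox' : BoxB σ.dur Z') (ρ : Set C)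
    (hset : Z' = {ν' | ∃ ν ∈ Zg, ν' = symResetVal ν ρ}) : VInv σ Z' := by
  have hform : ∀ u v, vB Z' u v = vB Zg (rmap ρ u) (rmap ρ v) := by
    intro u v; rw [hset]; exact vB_reset ρ u v
  refine ⟨hz', hne', hbox', ?_, ?_, ?_⟩
  · intro u
    rw [hform u tId, rmap_tId]
    exact hG.colT (rmap ρ u)
  · intro v
    rw [hform tId v, rmap_tId]
    exact hG.rowT (rmap ρ v)
  · intro u v
    rw [hform u v, hform u tId, hform tId v, rmap_tId]
    exact hG.star (rmap ρ u) (rmap ρ v)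

/-- The set of valuations over `C ⊔ {T}` whose restriction satisfies a guard. -/
def SatG {C : Type} (g : Guard C) : Set (ClockT C → ℝ) :=
  {ν | guardSat (fun c => ν (some c)) g}

lemma satG_nil : SatG ([] : Guard C) = Set.univ := by
  ext ν; simp [SatG, guardSat]

lemma satG_cons (p : C × CmpOp × ℕ) (g : Guard C) :
    SatG (p :: g) = SatG [p] ∩ SatG g := by
  ext ν; simp [SatG, guardSat]

lemma VInv_inter_single (hI : VInv σ Z) (p : C × CmpOp × ℕ)
    (hne : (Z ∩ SatG [p]).Nonempty) : VInv σ (Z ∩ SatG [p]) := by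
  obtain ⟨c, op, d⟩ := p
  have hboxS : BoxB σ.dur (Z ∩ SatG [(c, op, d)]) := fun ν hν => hI.box ν hν.1
  cases op
  case lt =>
    have hSet : SatG [((c : C), CmpOp.lt, d)] =
        {ν : ClockT C → ℝ | dfr ν (some (some c)) none < (d : ℝ)} := by
      ext ν; simp [SatG, guardSat, CmpOp.eval, dfr, extRef]
    rw [hSet] at hne ⊢
    obtain ⟨ν, hνZ, hνS⟩ := hne
    refine VInv_upperClock hI (isZone_inter_lt hI.zone _ _ _) ⟨ν, hνZ, hνS⟩
      (fun μ hμ => hboxS μ (by rw [hSet]; exact hμ)) (kw := (d : ℤ))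
      (by push_cast; rfl) ⟨ν, hνZ, le_of_lt hνS⟩ ?_
    exact tighten_lt hI.zone hI.bdd (some (some c)) none (d : ℝ) ⟨ν, hνZ, hνS⟩
  case le =>
    have hSet : SatG [((c : C), CmpOp.le, d)] =
        {ν : ClockT C → ℝ | dfr ν (some (some c)) none ≤ (d : ℝ)} := by
      ext ν; simp [SatG, guardSat, CmpOp.eval, dfr, extRef]
    rw [hSet] at hne ⊢
    obtain ⟨ν, hνZ, hνS⟩ := hne
    refine VInv_upperClock hI (isZone_inter_le hI.zone _ _ _) ⟨ν, hνZ, hνS⟩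
      (fun μ hμ => hboxS μ (by rw [hSet]; exact hμ)) (kw := (d : ℤ))
      (by push_cast; rfl) ⟨ν, hνZ, hνS⟩ ?_
    exact tighten_le hI.zone hI.bdd (some (some c)) none (d : ℝ) ⟨ν, hνZ, hνS⟩
  case gt =>
    have hSet : SatG [((c : C), CmpOp.gt, d)] =
        {ν : ClockT C → ℝ | dfr ν none (some (some c)) < -(d : ℝ)} := by
      ext ν
      simp only [SatG, guardSat, CmpOp.eval, dfr, extRef, Set.mem_setOf_eq,
        List.mem_singleton, forall_eq, gt_iff_lt]
      constructor <;> intro h <;> [skip; skip] <;> linarith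
    rw [hSet] at hne ⊢
    obtain ⟨ν, hνZ, hνS⟩ := hne
    refine VInv_lowerClock hI (isZone_inter_lt hI.zone _ _ _) ⟨ν, hνZ, hνS⟩
      (fun μ hμ => hboxS μ (by rw [hSet]; exact hμ)) (kw := -(d : ℤ))
      (by push_cast; rfl) ⟨ν, hνZ, le_of_lt hνS⟩ ?_
    exact tighten_lt hI.zone hI.bdd none (some (some c)) (-(d : ℝ)) ⟨ν, hνZ, hνS⟩
  case ge =>
    have hSet : SatG [((c : C), CmpOp.ge, d)] =
        {ν : ClockT C → ℝ | dfr ν none (some (some c)) ≤ -(d : ℝ)} := by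
      ext ν
      simp only [SatG, guardSat, CmpOp.eval, dfr, extRef, Set.mem_setOf_eq,
        List.mem_singleton, forall_eq, ge_iff_le]
      constructor <;> intro h <;> [skip; skip] <;> linarith
    rw [hSet] at hne ⊢
    obtain ⟨ν, hνZ, hνS⟩ := hne
    refine VInv_lowerClock hI (isZone_inter_le hI.zone _ _ _) ⟨ν, hνZ, hνS⟩
      (fun μ hμ => hboxS μ (by rw [hSet]; exact hμ)) (kw := -(d : ℤ))
      (by push_cast; rfl) ⟨ν, hνZ, hνS⟩ ?_
    exact tighten_le hI.zone hI.bdd none (some (some c)) (-(d : ℝ)) ⟨ν, hνZ, hνS⟩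

lemma VInv_inter_guard (hI : VInv σ Z) (g : Guard C)
    (hne : (Z ∩ SatG g).Nonempty) : VInv σ (Z ∩ SatG g) := by
  induction g generalizing Z with
  | nil => rw [satG_nil, Set.inter_univ]; exact hI
  | cons p g ih =>
    have hsplit : Z ∩ SatG (p :: g) = (Z ∩ SatG [p]) ∩ SatG g := by
      rw [satG_cons, Set.inter_assoc]
    rw [hsplit] at hne ⊢
    have hne1 : (Z ∩ SatG [p]).Nonempty := hne.mono Set.inter_subset_left
    exact ih (VInv_inter_single hI p hne1) hne

end ResetGuard


/- ### List helpers for the stutter-free word component -/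

lemma findIdx_range_eq {p : ℕ → Bool} {n k : ℕ} (hk : k < n) (hpk : p k = true)
    (hlt : ∀ j < k, p j = false) : (List.range n).findIdx p = k := by
  have hsplit : List.range n = List.range' 0 k ++ List.range' k (n - k) := by
    rw [List.range_eq_range']
    have h0 := List.range'_append (s := 0) (m := k) (n := n - k) (step := 1)
    rw [Nat.one_mul, Nat.zero_add] at h0
    rw [h0]
    congr 1
    omega
  rw [hsplit, List.findIdx_append]
  have h1 : (List.range' 0 k).findIdx p = (List.range' 0 k).length := by
    rw [List.findIdx_eq_length]
    intro x hx
    rw [List.mem_range'_1] at hx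
    exact hlt x (by omega)
  rw [h1]
  simp only [lt_irrefl, if_false]
  have h2 : n - k = (n - k - 1) + 1 := by omega
  rw [h2, List.range'_succ, List.findIdx_cons, hpk]
  simp [List.length_range']

lemma filter_range_singleton {p : ℕ → Bool} {n k : ℕ} (hk : k < n)
    (h : ∀ x < n, (p x = true ↔ x = k)) : (List.range n).filter p = [k] := by
  induction n with
  | zero => omega
  | succ m ih =>
    rw [List.range_succ, List.filter_append]
    rcases Nat.lt_or_ge k m with hkm | hkm
    · rw [ih hkm (fun x hx => h x (by omega))]
      have hpm : p m = false := by
        by_contra hb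
        rw [Bool.not_eq_false] at hb
        have := (h m (by omega)).mp hb
        omega
      simp [hpm]
    · have hkm' : k = m := by omega
      subst hkm'
      have h1 : (List.range k).filter p = [] := by
        rw [List.filter_eq_nil_iff]
        intro a ha
        rw [List.mem_range] at ha
        intro hpa
        have := (h a (by omega)).mp hpa
        omega
      have h2 : p k = true := (h k (by omega)).mpr rfl
      simp [h1, h2]

lemma mem_valuesOn {σ : Signal X} {t t' : ℝ} {a : X → ℝ} (ha : a ∈ σ.valuesOn t t') :
    ∃ j, j < σ.len ∧ a = σ.val j := by
  unfold Signal.valuesOn at ha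
  have := (List.destutter_sublist _ _).subset ha
  rw [List.mem_map] at this
  obtain ⟨j, hj, rfl⟩ := this
  rw [List.mem_filter] at hj
  exact ⟨j, List.mem_range.mp hj.1, rfl⟩

lemma length_valuesOn_le {σ : Signal X} {t t' : ℝ} {lo i : ℕ}
    (h : ∀ x, x < σ.len → (σ.pref x < t' ∧ t < σ.pref (x + 1)) → lo ≤ x ∧ x < i) :
    (σ.valuesOn t t').length ≤ i - lo := by
  unfold Signal.valuesOn
  set fl := (List.range σ.len).filter
    (fun x => decide (σ.pref x < t' ∧ t < σ.pref (x + 1))) with hfl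
  have h1 : (List.destutter (· ≠ ·) (fl.map σ.val)).length ≤ (fl.map σ.val).length :=
    (List.destutter_sublist _ _).length_le
  have h2 : (fl.map σ.val).length = fl.length := List.length_map _
  have hnodup : fl.Nodup := List.nodup_range.filter _
  have hsub : fl.toFinset ⊆ Finset.Ico lo i := by
    intro x hx
    rw [List.mem_toFinset, hfl, List.mem_filter] at hx
    obtain ⟨hx1, hx2⟩ := hx
    rw [List.mem_range] at hx1
    have := h x hx1 (by simpa using hx2)
    rw [Finset.mem_Ico]
    exact this
  have h3 : fl.length ≤ i - lo := by
    rw [← List.toFinset_card_of_nodup hnodup]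
    calc fl.toFinset.card ≤ (Finset.Ico lo i).card := Finset.card_le_card hsub
    _ = i - lo := Nat.card_Ico lo i
  omega

lemma absCat_length_le {V : Type} (u v : List V) :
    (absCat u v).length ≤ u.length + v.length := by
  unfold absCat
  calc (List.destutter _ (u ++ v)).length ≤ (u ++ v).length :=
    (List.destutter_sublist _ _).length_le
  _ = u.length + v.length := List.length_append

lemma absCat_mem {V : Type} {u v : List V} {a : V} (ha : a ∈ absCat u v) :
    a ∈ u ∨ a ∈ v := by
  unfold absCat at ha
  have := (List.destutter_sublist _ _).subset ha
  rwa [List.mem_append] at this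

/-- Inside an open stripe, `valuesOn` is a singleton and equals `valAt`. -/
lemma valuesOn_same_stripe {σ : Signal X} {s : ℕ} (hs1 : 1 ≤ s) (hs2 : s ≤ σ.len)
    {t t' : ℝ} (ht1 : σ.pref (s - 1) < t) (ht2 : t < σ.pref s)
    (ht3 : σ.pref (s - 1) < t') (ht4 : t' ≤ σ.pref s) :
    σ.valuesOn t t' = [σ.val (s - 1)] := by
  unfold Signal.valuesOn
  have hkey : (List.range σ.len).filter
      (fun x => decide (σ.pref x < t' ∧ t < σ.pref (x + 1))) = [s - 1] := by
    apply filter_range_singleton (by omega)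
    intro x hx
    simp only [decide_eq_true_eq]
    constructor
    · rintro ⟨h1, h2⟩
      by_contra hne
      rcases Nat.lt_or_ge x (s - 1) with hlt | hge
      · have : σ.pref (x + 1) ≤ σ.pref (s - 1) := pref_mono σ (by omega)
        linarith
      · have hge' : s ≤ x := by omega
        have : σ.pref s ≤ σ.pref x := pref_mono σ hge'
        linarith
    · rintro rfl
      constructor
      · have : σ.pref (s - 1) ≤ σ.pref (s-1) := le_refl _
        linarith
      · have heq : s - 1 + 1 = s := by omega
        rw [heq]
        exact ht2
  rw [hkey]
  simp [List.destutter]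

lemma valAt_open_stripe {σ : Signal X} {s : ℕ} (hs1 : 1 ≤ s) (hs2 : s ≤ σ.len)
    {t : ℝ} (ht1 : σ.pref (s - 1) < t) (ht2 : t < σ.pref s) :
    σ.valAt t = σ.val (s - 1) := by
  unfold Signal.valAt
  have hidx : (List.range σ.len).findIdx (fun i => decide (t < σ.pref (i + 1))) = s - 1 := by
    apply findIdx_range_eq (by omega)
    · simp only [decide_eq_true_eq]
      have heq : s - 1 + 1 = s := by omega
      rw [heq]
      exact ht2
    · intro j hj
      simp only [decide_eq_false_iff_not, not_lt]
      calc σ.pref (j + 1) ≤ σ.pref (s - 1) := pref_mono σ (by omega)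
      _ ≤ t := le_of_lt ht1
  rw [hidx]


/- ### The full invariant on symbolic states -/

/-- Condition on the value of `T` in a phase `(s, punctual?)`. -/
def PhCond (σ : Signal X) (ph : ℕ × Bool) (x : ℝ) : Prop :=
  if ph.2 then x = σ.pref ph.1 else (σ.pref (ph.1 - 1) < x ∧ x < σ.pref ph.1)

/-- The stripe of a phase. -/
def PhSet {C : Type} (σ : Signal X) (ph : ℕ × Bool) : Set (ClockT C → ℝ) :=
  {ν | PhCond σ ph (ν none)}

/-- Validity of a phase. -/
def PhOK (σ : Signal X) (ph : ℕ × Bool) : Prop :=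
  if ph.2 then ph.1 ≤ σ.len else 1 ≤ ph.1 ∧ ph.1 ≤ σ.len

/-- The index below which the word component has been collected. -/
def loPh (ph : ℕ × Bool) : ℕ := if ph.2 then ph.1 else ph.1 - 1

/-- Invariant on the word component. -/
def AOK (σ : Signal X) (s : ℕ) (abar : List (X → ℝ)) : Prop :=
  (∀ a ∈ abar, ∃ j, j < σ.len ∧ a = σ.val j) ∧ abar.length ≤ 2 * s + 1

/-- The full invariant on symbolic states. -/
def Inv {L : Type} (σ : Signal X) (q : SymState X L C) : Prop :=
  VInv σ q.2.1 ∧ ∃ ph : ℕ × Bool, PhOK σ ph ∧ q.2.1 ⊆ PhSet σ ph ∧ AOK σ ph.1 q.2.2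

lemma isZone_singleton_zero [Finite C] : IsZone ({zeroValT} : Set (ClockT C → ℝ)) := by
  have hFC : Fintype C := Fintype.ofFinite C
  have : Fintype (ClockT C) := instFintypeOption
  apply isZone_iff.mpr
  refine ⟨(Finset.univ : Finset (ClockT C)).toList.flatMap
    (fun c => [.inl (c, .le, 0), .inl (c, .ge, 0)]), ?_⟩
  ext ν
  simp only [Set.mem_singleton_iff, Set.mem_setOf_eq]
  constructor
  · rintro rfl a ha
    rw [List.mem_flatMap] at ha
    obtain ⟨c, -, hc⟩ := ha
    simp only [List.mem_cons, List.not_mem_nil, or_false] at hc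
    rcases hc with rfl | rfl
    · simp [Asat, CmpOp.eval, zeroValT]
    · simp [Asat, CmpOp.eval, zeroValT]
  · intro h
    funext c
    have h1 := h (.inl (c, .le, 0)) (by
      rw [List.mem_flatMap]
      exact ⟨c, by simp, by simp⟩)
    have h2 := h (.inl (c, .ge, 0)) (by
      rw [List.mem_flatMap]
      exact ⟨c, by simp, by simp⟩)
    simp only [Asat, CmpOp.eval] at h1 h2
    show ν c = zeroValT c
    unfold zeroValT
    simp only [ge_iff_le] at h2
    linarith

lemma vB_singleton (ν₀ : ClockT C → ℝ) (u v : Option (ClockT C)) :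
    vB {ν₀} u v = dfr ν₀ u v := by
  unfold vB
  rw [Set.image_singleton, csSup_singleton]

lemma dfr_zeroValT (u v : Option (ClockT C)) : dfr (zeroValT : ClockT C → ℝ) u v = 0 := by
  have h : ∀ x : Option (ClockT C), extRef (zeroValT : ClockT C → ℝ) x = 0 := by
    intro x; match x with
    | none => rfl
    | some c => rfl
  unfold dfr; rw [h, h]; ring

lemma Inv_init [Finite C] {L : Type} (σ : Signal X) {A : TSA X L C} {q : SymState X L C}
    (hq : q ∈ symQ0 A) : Inv σ q := by
  obtain ⟨-, hZ, habar⟩ := hq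
  constructor
  · rw [hZ]
    have hvB : ∀ u v, vB ({zeroValT} : Set (ClockT C → ℝ)) u v = 0 := by
      intro u v; rw [vB_singleton, dfr_zeroValT]
    refine ⟨isZone_singleton_zero, ⟨zeroValT, rfl⟩, ?_, ?_, ?_, ?_⟩
    · rintro ν rfl
      refine ⟨fun c => ⟨le_refl 0, le_refl 0⟩, dur_nonneg σ⟩
    · intro u
      exact ⟨0, 0, Nat.zero_le _, by rw [hvB, pref_zero]; norm_num⟩
    · intro v
      exact ⟨0, 0, Nat.zero_le _, by rw [hvB, pref_zero]; norm_num⟩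
    · intro u v
      left
      rw [hvB, hvB, hvB]
      norm_num
  · refine ⟨(0, true), ?_, ?_, ?_⟩
    · show (0 : ℕ) ≤ σ.len
      exact Nat.zero_le _
    · rw [hZ]
      rintro ν rfl
      show (zeroValT : ClockT C → ℝ) none = σ.pref 0
      rw [pref_zero]; rfl
    · rw [habar]
      exact ⟨by simp, by simp⟩

/- ### Step preservation: discrete transitions -/

lemma box_of_symQ_up {σ : Signal X} {Z Z' : Set (ClockT C → ℝ)}
    (hbox : BoxB σ.dur Z) (hsub : Z' ⊆ upClosure Z) (hT : ∀ ν ∈ Z', ν none ≤ σ.dur) :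
    BoxB σ.dur Z' := by
  intro ν' hν'
  obtain ⟨ν, hν, τ, hτ, rfl⟩ := hsub hν'
  obtain ⟨h1, h2⟩ := hbox ν hν
  refine ⟨fun c => ⟨?_, ?_⟩, hT _ hν'⟩
  · have := (h1 c).1; simp only []; linarith
  · have := (h1 c).2; simp only []; linarith

lemma Inv_step_discrete {L : Type} {σ : Signal X} {q q' : SymState X L C}
    (hI : Inv σ q) (hq' : q' ∈ symQ σ) {g : Guard C} {ρ : Set C}
    (hZ' : q'.2.1 = {ν' | ∃ ν ∈ q.2.1,
      guardSat (fun c => ν (some c)) g ∧ ν' = symResetVal ν ρ})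
    (habar' : q'.2.2 = []) : Inv σ q' := by
  obtain ⟨hV, ph, hphOK, hphsub, hAOK⟩ := hI
  obtain ⟨hz', hne', hT', -, -⟩ := hq'
  have hZ'2 : q'.2.1 = {ν' | ∃ ν ∈ (q.2.1 ∩ SatG g), ν' = symResetVal ν ρ} := by
    rw [hZ']
    ext ν'
    simp only [Set.mem_setOf_eq, Set.mem_inter_iff, SatG]
    constructor
    · rintro ⟨ν, hν, hg, rfl⟩; exact ⟨ν, ⟨hν, hg⟩, rfl⟩
    · rintro ⟨ν, ⟨hν, hg⟩, rfl⟩; exact ⟨ν, hν, hg, rfl⟩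
  have hZgne : (q.2.1 ∩ SatG g).Nonempty := by
    obtain ⟨ν', hν'⟩ := hne'
    rw [hZ'2] at hν'
    obtain ⟨ν, hν, -⟩ := hν'
    exact ⟨ν, hν⟩
  have hVg : VInv σ (q.2.1 ∩ SatG g) := VInv_inter_guard hV g hZgne
  have hbox' : BoxB σ.dur q'.2.1 := by
    intro ν' hν'
    rw [hZ'2] at hν'
    obtain ⟨ν, ⟨hν, -⟩, rfl⟩ := hν'
    obtain ⟨h1, h2⟩ := hV.box ν hν
    have hTeq : symResetVal ν ρ none = ν none := rfl
    refine ⟨fun c => ?_, by rw [hTeq]; exact h2⟩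
    match c with
    | none => rw [hTeq]; exact h1 none
    | some c' =>
      by_cases hc : c' ∈ ρ
      · constructor
        · show (0:ℝ) ≤ if c' ∈ ρ then 0 else ν (some c')
          rw [if_pos hc]
        · show (if c' ∈ ρ then 0 else ν (some c')) ≤ symResetVal ν ρ none
          rw [if_pos hc, hTeq]
          exact le_trans (h1 none).1 (le_refl _)
      · constructor
        · show (0:ℝ) ≤ if c' ∈ ρ then 0 else ν (some c')
          rw [if_neg hc]
          exact (h1 (some c')).1
        · show (if c' ∈ ρ then 0 else ν (some c')) ≤ symResetVal ν ρ none
          rw [if_neg hc, hTeq]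
          exact (h1 (some c')).2
  constructor
  · exact VInv_reset hVg hz' hne' hbox' ρ hZ'2
  · refine ⟨ph, hphOK, ?_, ?_⟩
    · intro ν' hν'
      rw [hZ'2] at hν'
      obtain ⟨ν, ⟨hν, -⟩, rfl⟩ := hν'
      have := hphsub hν
      show PhCond σ ph ((symResetVal ν ρ) none)
      have hTeq : symResetVal ν ρ none = ν none := rfl
      rw [hTeq]
      exact this
    · rw [habar']
      exact ⟨by simp, by simp⟩


/- ### Step preservation: time elapse -/

lemma Inv_step_elapse {L : Type} {σ : Signal X} {q q' : SymState X L C}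
    (hI : Inv σ q) (hq : q ∈ symQ σ) (hq' : q' ∈ symQ σ)
    (habar : ∃ ν ∈ q.2.1, ∃ ν' ∈ q'.2.1,
      q'.2.2 = absCat q.2.2 (σ.valuesOn (ν none) (ν' none)))
    {i : ℕ} (hi1 : 1 ≤ i) (hile : i ≤ σ.len)
    (hstripe : q'.2.1 = upClosure q.2.1 ∩ {ν | ν none = σ.pref i} ∨
      q'.2.1 = upClosure q.2.1 ∩ {ν | σ.pref (i-1) < ν none ∧ ν none < σ.pref i}) :
    Inv σ q' := by
  obtain ⟨hV, ph, hphOK, hphsub, hAOK⟩ := hI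
  obtain ⟨hz', hne', hT', -, -⟩ := hq'
  have hlu : σ.pref (i - 1) < σ.pref i := by
    have := pref_succ_lt σ (show i - 1 < σ.len by omega)
    rwa [show i - 1 + 1 = i by omega] at this
  have hsubup : q'.2.1 ⊆ upClosure q.2.1 := by
    rcases hstripe with h | h <;> rw [h] <;> exact Set.inter_subset_left
  have hbox' : BoxB σ.dur q'.2.1 := box_of_symQ_up hV.box hsubup hT'
  -- the feasible part F of the current zone
  have hFne : (q.2.1 ∩ {ν | ν none < σ.pref i}).Nonempty := by
    obtain ⟨ν', hν'⟩ := hne'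
    rcases hstripe with h | h <;> rw [h] at hν' <;>
      obtain ⟨⟨ν, hν, τ, hτ, rfl⟩, hc⟩ := hν'
    · have hc' : ν none + τ = σ.pref i := hc
      exact ⟨ν, hν, show ν none < _ by linarith⟩
    · obtain ⟨hc1, hc2⟩ := hc
      have hc2' : ν none + τ < σ.pref i := hc2
      exact ⟨ν, hν, show ν none < _ by linarith⟩
  have hTset : {ν : ClockT C → ℝ | ν none < σ.pref i} =
      {ν : ClockT C → ℝ | dfr ν tId none < σ.pref i} := by
    ext ν; simp [dfr, extRef]
  have hFne2 : (q.2.1 ∩ {ν | dfr ν tId none < σ.pref i}).Nonempty := by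
    rw [← hTset]; exact hFne
  have hVF : VInv σ (q.2.1 ∩ {ν | ν none < σ.pref i}) := by
    rw [hTset]
    obtain ⟨ν₁, hν₁⟩ := id hFne2
    refine VInv_upperT hV (isZone_inter_lt hV.zone tId none _) hFne2
      (fun ν hν => hV.box ν hν.1) hile rfl ⟨ν₁, hν₁.1, le_of_lt hν₁.2⟩ ?_
    exact tighten_lt hV.zone hV.bdd tId none _ hFne2
  have hFbox : BoxB σ.dur (q.2.1 ∩ {ν | ν none < σ.pref i}) := fun ν hν => hV.box ν hν.1
  have hFbdd := box_bddAbove (dur_nonneg σ) hFbox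
  have hZ'bdd := box_bddAbove (dur_nonneg σ) hbox'
  -- word component facts
  obtain ⟨ν₀, hν₀, ν₀', hν₀', heq⟩ := habar
  have ht' : σ.pref (i - 1) < ν₀' none ∧ ν₀' none ≤ σ.pref i := by
    rcases hstripe with h | h <;> rw [h] at hν₀'
    · have : ν₀' none = σ.pref i := hν₀'.2
      exact ⟨by rw [this]; exact hlu, le_of_eq this⟩
    · exact ⟨hν₀'.2.1, le_of_lt hν₀'.2.2⟩
  have htcond : PhCond σ ph (ν₀ none) := hphsub hν₀
  -- length bound for the appended word
  have hvallen : (σ.valuesOn (ν₀ none) (ν₀' none)).length ≤ i - loPh ph := by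
    apply length_valuesOn_le
    intro x hx ⟨hx1, hx2⟩
    constructor
    · -- loPh ph ≤ x
      unfold loPh
      rcases hb : ph.2 with _ | _
      · -- open phase
        rw [if_neg (by simp : ¬ (false = true))]
        have htc := htcond
        unfold PhCond at htc
        rw [hb, if_neg (by simp)] at htc
        by_contra hc
        push_neg at hc
        have hmono : σ.pref (x + 1) ≤ σ.pref (ph.1 - 1) := pref_mono σ (by omega)
        linarith [htc.1]
      · -- punctual phase
        rw [if_pos (rfl : (true:Bool) = true)]
        have htc := htcond
        unfold PhCond at htc
        rw [hb, if_pos rfl] at htc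
        by_contra hc
        push_neg at hc
        have hmono : σ.pref (x + 1) ≤ σ.pref ph.1 := pref_mono σ (by omega)
        rw [htc] at hx2
        linarith
    · -- x < i
      have : σ.pref x < σ.pref i := lt_of_lt_of_le hx1 ht'.2
      exact (pref_lt_iff σ hile).mp this
  have hAOK' : AOK σ i q'.2.2 := by
    constructor
    · intro a ha
      rw [heq] at ha
      rcases absCat_mem ha with h | h
      · exact hAOK.1 a h
      · exact mem_valuesOn h
    · -- length bound
      by_cases hanil : q.2.2 = []
      · rw [heq, hanil]
        have := absCat_length_le ([] : List (X → ℝ)) (σ.valuesOn (ν₀ none) (ν₀' none))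
        simp only [List.length_nil, Nat.zero_add] at this
        omega
      · by_cases hmerge : ph.2 = false ∧ ph.1 = i
        · -- same-stripe merge
          obtain ⟨hb, hsi⟩ := hmerge
          unfold PhCond at htcond
          rw [hb, if_neg (by simp)] at htcond
          rw [hsi] at htcond
          have hvOn : σ.valuesOn (ν₀ none) (ν₀' none) = [σ.val (i - 1)] :=
            valuesOn_same_stripe hi1 hile htcond.1 htcond.2 ht'.1 ht'.2
          have hvAt : σ.valAt (ν₀ none) = σ.val (i - 1) :=
            valAt_open_stripe hi1 hile htcond.1 htcond.2
          obtain ⟨-, -, -, -, hcond⟩ := hq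
          rcases hcond with hc | hc
          · exact absurd hc hanil
          · have : q'.2.2 = q.2.2 := by
              rw [heq, hvOn, ← hvAt]
              exact hc ν₀ hν₀
            rw [this]
            have := hAOK.2
            omega
        · -- phase strictly before the target stripe
          have hslt : ph.1 < i := by
            obtain ⟨μ, hμZ, hμlt⟩ := hFne
            have hμlt' : μ none < σ.pref i := hμlt
            have hcondμ : PhCond σ ph (μ none) := hphsub hμZ
            unfold PhCond at hcondμ
            rcases hb : ph.2 with _ | _
            · rw [hb, if_neg (by simp)] at hcondμ
              have h1 : σ.pref (ph.1 - 1) < σ.pref i := lt_trans hcondμ.1 hμlt'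
              have h2 : ph.1 - 1 < i := (pref_lt_iff σ hile).mp h1
              have h3 : ph.1 ≠ i := fun hc => hmerge ⟨hb, hc⟩
              have h4 : 1 ≤ ph.1 := by
                unfold PhOK at hphOK
                rw [hb, if_neg (by simp)] at hphOK
                exact hphOK.1
              omega
            · rw [hb, if_pos rfl] at hcondμ
              rw [hcondμ] at hμlt'
              exact (pref_lt_iff σ hile).mp hμlt'
          have h5 := absCat_length_le q.2.2 (σ.valuesOn (ν₀ none) (ν₀' none))
          rw [← heq] at h5
          have h6 := hAOK.2
          unfold loPh at hvallen
          rcases hb : ph.2 with _ | _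
          · -- open phase: need 1 ≤ ph.1
            rw [hb, if_neg (by simp)] at hvallen
            have h4 : 1 ≤ ph.1 := by
              unfold PhOK at hphOK
              rw [hb, if_neg (by simp)] at hphOK
              exact hphOK.1
            omega
          · rw [hb, if_pos rfl] at hvallen
            omega
  constructor
  · -- VInv of the target zone
    rcases hstripe with hpt | hop
    · -- punctual stripe
      have h1 : ∀ c c' : ClockT C, vB q'.2.1 (some c) (some c') =
          vB (q.2.1 ∩ {ν | ν none < σ.pref i}) (some c) (some c') := by
        intro c c'; rw [hpt]; exact up_punct_VV c c'
      have h2 : ∀ c : ClockT C, vB q'.2.1 (some c) none =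
          σ.pref i + vB (q.2.1 ∩ {ν | ν none < σ.pref i}) (some c) tId := by
        intro c; rw [hpt]; exact up_punct_colRef c hFne (hFbdd _ _)
      have h3 : ∀ c : ClockT C, vB q'.2.1 none (some c) =
          vB (q.2.1 ∩ {ν | ν none < σ.pref i}) tId (some c) - σ.pref i := by
        intro c; rw [hpt]; exact up_punct_rowRef c hFne (hFbdd _ _)
      exact VInv_punct hVF hz' hne' hbox' hile rfl h1 h2 h3
    · -- open stripe
      have hne'' : (upClosure q.2.1 ∩
          {ν | σ.pref (i-1) < ν none ∧ ν none < σ.pref i}).Nonempty := by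
        rw [← hop]; exact hne'
      have hZ'bdd' : ∀ u v, BddAbove ((fun ν => dfr ν u v) '' (upClosure q.2.1 ∩
          {ν | σ.pref (i-1) < ν none ∧ ν none < σ.pref i})) := by
        intro u v; rw [← hop]; exact hZ'bdd u v
      have h1 : ∀ c c' : ClockT C, vB q'.2.1 (some c) (some c') =
          vB (q.2.1 ∩ {ν | ν none < σ.pref i}) (some c) (some c') := by
        intro c c'; rw [hop]; exact up_open_VV hlu c c'
      have h2 : ∀ c : ClockT C, vB q'.2.1 (some c) none =
          σ.pref i + vB (q.2.1 ∩ {ν | ν none < σ.pref i}) (some c) tId := by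
        intro c; rw [hop]
        exact up_open_colRef hlu c hFne (hFbdd _ _) (hZ'bdd' _ _) hne''
      by_cases hcase : ph.2 = false ∧ ph.1 = i
      · -- same stripe
        have hZl : ∀ ν ∈ q.2.1, σ.pref (i-1) < ν none := by
          intro ν hν
          have hthis : PhCond σ ph (ν none) := hphsub hν
          unfold PhCond at hthis
          rw [hcase.1, if_neg (by simp)] at hthis
          rw [hcase.2] at hthis
          exact hthis.1
        have h3 : ∀ c : ClockT C, vB q'.2.1 none (some c) =
            vB (q.2.1 ∩ {ν | ν none < σ.pref i}) none (some c) := by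
          intro c; rw [hop]
          exact up_open_rowRef_same hlu c hZl hFne (hFbdd _ _) (hZ'bdd' _ _) hne''
        exact VInv_open_same hVF hz' hne' hbox' hile rfl h1 h2 h3
      · -- strictly later stripe
        have hZl : ∀ ν ∈ q.2.1, ν none ≤ σ.pref (i-1) := by
          have hslt : ph.1 < i ∨ (ph.2 = true ∧ ph.1 ≤ i - 1) := by
            obtain ⟨μ, hμZ, hμlt⟩ := hFne
            have hμlt' : μ none < σ.pref i := hμlt
            have hcondμ : PhCond σ ph (μ none) := hphsub hμZ
            unfold PhCond at hcondμ
            rcases hb : ph.2 with _ | _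
            · rw [hb, if_neg (by simp)] at hcondμ
              have h1' : σ.pref (ph.1 - 1) < σ.pref i := lt_trans hcondμ.1 hμlt'
              have h2' : ph.1 - 1 < i := (pref_lt_iff σ hile).mp h1'
              have h3' : ph.1 ≠ i := fun hc => hcase ⟨hb, hc⟩
              have h4' : 1 ≤ ph.1 := by
                unfold PhOK at hphOK
                rw [hb, if_neg (by simp)] at hphOK
                exact hphOK.1
              left; omega
            · rw [hb, if_pos rfl] at hcondμ
              rw [hcondμ] at hμlt'
              right
              exact ⟨rfl, by have := (pref_lt_iff σ hile).mp hμlt'; omega⟩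
          intro ν hν
          have hcondν : PhCond σ ph (ν none) := hphsub hν
          unfold PhCond at hcondν
          rcases hb : ph.2 with _ | _
          · rw [hb, if_neg (by simp)] at hcondν
            have h4' : 1 ≤ ph.1 := by
              unfold PhOK at hphOK
              rw [hb, if_neg (by simp)] at hphOK
              exact hphOK.1
            have hslt' : ph.1 < i := by
              rcases hslt with h | ⟨hbad, -⟩
              · exact h
              · rw [hb] at hbad; exact absurd hbad (by simp)
            calc ν none ≤ σ.pref ph.1 := le_of_lt hcondν.2
            _ ≤ σ.pref (i - 1) := pref_mono σ (by omega)
          · rw [hb, if_pos rfl] at hcondν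
            have hle' : ph.1 ≤ i - 1 := by
              rcases hslt with h | ⟨-, h⟩
              · omega
              · exact h
            rw [hcondν]
            exact pref_mono σ hle'
        have h3 : ∀ c : ClockT C, vB q'.2.1 none (some c) =
            vB (q.2.1 ∩ {ν | ν none < σ.pref i}) tId (some c) - σ.pref (i-1) := by
          intro c; rw [hop]
          exact up_open_rowRef_lo hlu c hZl hFne (hFbdd _ _) (hZ'bdd' _ _) hne''
        exact VInv_open_lo hVF hz' hne' hbox' hi1 hile rfl rfl h1 h2 h3
  · -- phase of the target
    rcases hstripe with hpt | hop
    · refine ⟨(i, true), ?_, ?_, hAOK'⟩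
      · show PhOK σ (i, true)
        unfold PhOK
        simpa using hile
      · rw [hpt]
        rintro ν ⟨-, hν⟩
        show PhCond σ (i, true) (ν none)
        unfold PhCond
        simpa using hν
    · refine ⟨(i, false), ?_, ?_, hAOK'⟩
      · show PhOK σ (i, false)
        unfold PhOK
        simp only [if_false]
        exact ⟨hi1, hile⟩
      · rw [hop]
        rintro ν ⟨-, hν⟩
        show PhCond σ (i, false) (ν none)
        unfold PhCond
        simpa using hν

/-- The full invariant is preserved by symbolic steps. -/
lemma Inv_step {L : Type} {σ : Signal X} {A : TSA X L C} {q q' : SymState X L C}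
    (hI : Inv σ q) (hs : symStep σ A q q') : Inv σ q' := by
  obtain ⟨hq, hq', hcase⟩ := hs
  rcases hcase with ⟨g, ρ, -, hZ', -, habar'⟩ | ⟨-, habar, i, hi1, hile, hstripe⟩
  · exact Inv_step_discrete hI hq' hZ' habar'
  · exact Inv_step_elapse hI hq hq' habar hi1 hile hstripe


/- ### Finiteness assembly -/

/-- The invariant holds on all reachable symbolic states. -/
lemma Inv_reach [Finite C] {L : Type} {σ : Signal X} {A : TSA X L C} {q : SymState X L C}
    (hq : q ∈ reach (symStep σ A) (symQ0 A)) : Inv σ q := by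
  obtain ⟨q0, hq0, hrt⟩ := hq
  induction hrt with
  | refl => exact Inv_init σ hq0
  | tail h1 h2 ih => exact Inv_step ih h2

/-- The finite set of possible canonical bounds. -/
def DVals (σ : Signal X) : Set ℝ :=
  {x | |x| ≤ σ.dur ∧ ∃ j ≤ σ.len, ∃ j' ≤ σ.len, ∃ k : ℤ, x = σ.pref j - σ.pref j' + k}

lemma DVals_finite (σ : Signal X) : (DVals σ).Finite := by
  set K : ℤ := ⌈(3:ℝ) * σ.dur⌉ with hK
  set f : ℕ × ℕ × ℤ → ℝ := fun t => σ.pref t.1 - σ.pref t.2.1 + t.2.2 with hf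
  have hfin : ((((Finset.range (σ.len+1)) ×ˢ (Finset.range (σ.len+1)) ×ˢ
      (Finset.Icc (-K) K)) : Finset (ℕ × ℕ × ℤ)) : Set (ℕ × ℕ × ℤ)).Finite :=
    Finset.finite_toSet _
  apply (hfin.image f).subset
  rintro x ⟨habs, j, hj, j', hj', k, rfl⟩
  have hd := dur_nonneg σ
  have h1 : (0:ℝ) ≤ σ.pref j := pref_nonneg σ j
  have h2 : σ.pref j ≤ σ.dur := pref_le_dur σ j
  have h3 : (0:ℝ) ≤ σ.pref j' := pref_nonneg σ j'
  have h4 : σ.pref j' ≤ σ.dur := pref_le_dur σ j'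
  have habs' := abs_le.mp habs
  have hkabs : |(k:ℝ)| ≤ 3 * σ.dur := by
    rw [abs_le]
    constructor <;> [skip; skip] <;> (obtain ⟨ha, hb⟩ := habs'; linarith)
  have hk1 : k ≤ K := by
    have := (abs_le.mp hkabs).2
    have h5 : (k : ℝ) ≤ (K : ℝ) := le_trans this (by rw [hK]; exact Int.le_ceil _)
    exact_mod_cast h5
  have hk2 : -K ≤ k := by
    have := (abs_le.mp hkabs).1
    have h5 : ((-K : ℤ) : ℝ) ≤ (k : ℝ) := by
      push_cast
      have h6 : -(3 * σ.dur) ≤ (k:ℝ) := this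
      have h7 : (3:ℝ) * σ.dur ≤ (K : ℝ) := by rw [hK]; exact Int.le_ceil _
      linarith
    exact_mod_cast h5
  refine ⟨(j, j', k), ?_, rfl⟩
  simp only [Finset.coe_product, Set.mem_prod, Finset.mem_coe, Finset.mem_range,
    Finset.mem_Icc]
  exact ⟨by omega, by omega, hk2, hk1⟩

lemma vB_mem_DVals {σ : Signal X} {Z : Set (ClockT C → ℝ)} (hV : VInv σ Z)
    (u v : Option (ClockT C)) : vB Z u v ∈ DVals σ := by
  obtain ⟨hlb, hub⟩ := vB_le_box (dur_nonneg σ) hV.box hV.ne u v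
  refine ⟨abs_le.mpr ⟨hlb, hub⟩, ?_⟩
  rcases hV.star u v with hs | ⟨k, hk⟩
  · obtain ⟨k1, j1, hj1, hk1⟩ := hV.colT u
    obtain ⟨k2, j2, hj2, hk2⟩ := hV.rowT v
    refine ⟨j2, hj2, j1, hj1, k1 + k2, ?_⟩
    rw [hs, hk1, hk2]
    push_cast
    ring
  · refine ⟨0, Nat.zero_le _, 0, Nat.zero_le _, k, ?_⟩
    rw [hk, pref_zero]
    ring

/-- The finite set of possible signal values. -/
def ValSet (σ : Signal X) : Set (X → ℝ) := {a | ∃ j, j < σ.len ∧ a = σ.val j}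

lemma ValSet_finite (σ : Signal X) : (ValSet σ).Finite := by
  have : ValSet σ ⊆ σ.val '' (Set.Iio σ.len) := by
    rintro a ⟨j, hj, rfl⟩
    exact ⟨j, hj, rfl⟩
  exact ((Set.finite_Iio σ.len).image σ.val).subset this

/-- The finite set of possible word components. -/
def WSet (σ : Signal X) : Set (List (X → ℝ)) :=
  {l | (∀ a ∈ l, a ∈ ValSet σ) ∧ l.length ≤ 2 * σ.len + 1}

lemma WSet_finite (σ : Signal X) : (WSet σ).Finite := by
  set n := 2 * σ.len + 1 with hn
  set f : List (X → ℝ) → (Fin (n+1) → Option (X → ℝ)) := fun l i => l[(i : ℕ)]? with hf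
  apply Set.Finite.of_finite_image (f := f)
  · apply Set.Finite.subset
      (Set.Finite.pi (t := fun _ : Fin (n+1) => insert none (some '' ValSet σ))
        (fun _ => ((ValSet_finite σ).image some).insert none))
    rintro g ⟨l, hl, rfl⟩
    intro i _
    rcases hg : l[(i : ℕ)]? with _ | a
    · show l[(i : ℕ)]? ∈ _
      rw [hg]
      exact Set.mem_insert _ _
    · show l[(i : ℕ)]? ∈ _
      rw [hg]
      right
      exact ⟨a, hl.1 a (List.mem_of_getElem? hg), rfl⟩
  · intro l1 h1 l2 h2 heq
    apply List.ext_getElem?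
    intro m
    rcases Nat.lt_or_ge m (n+1) with hm | hm
    · exact congrFun heq ⟨m, hm⟩
    · have e1 : l1[m]? = none := List.getElem?_eq_none_iff.mpr (by have := h1.2; omega)
      have e2 : l2[m]? = none := List.getElem?_eq_none_iff.mpr (by have := h2.2; omega)
      rw [e1, e2]

/-- Word components of invariant states lie in `WSet`. -/
lemma word_mem_WSet {L : Type} {σ : Signal X} {q : SymState X L C} (hI : Inv σ q) :
    q.2.2 ∈ WSet σ := by
  obtain ⟨-, ph, hphOK, -, hAOK⟩ := hI
  have hple : ph.1 ≤ σ.len := by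
    unfold PhOK at hphOK
    rcases hb : ph.2 with _ | _
    · rw [hb, if_neg (by simp)] at hphOK
      exact hphOK.2
    · rw [hb, if_pos rfl] at hphOK
      exact hphOK
  refine ⟨fun a ha => hAOK.1 a ha, ?_⟩
  have := hAOK.2
  omega


end Aux

/-- For any WSTTS `S^sym` of a signal `σ` and a TSWA `W`, the set of
symbolic states reachable from the initial symbolic states is finite. -/
theorem statement6 {X L C S : Type} [Finite X] [Finite L] [Finite C]
    [CSemiring S] [CompleteCSemiring S]
    (W : TSWA X L C S) (σ : Signal X) :
    (reach (symStep σ W.toTSA) (symQ0 W.toTSA)).Finite := by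
  classical
  have hFC : Fintype C := Fintype.ofFinite C
  have hFCT : Fintype (ClockT C) := instFintypeOption
  set Φ : SymState X L C → L × (Option (ClockT C) → Option (ClockT C) → ℝ) ×
      (Option (ClockT C) → Option (ClockT C) → Prop) × List (X → ℝ) :=
    fun q => (q.1, fun u v => vB q.2.1 u v, fun u v => AttB q.2.1 u v, q.2.2) with hΦ
  apply Set.Finite.of_finite_image (f := Φ)
  · -- the image is finite
    apply Set.Finite.subset
      ((Set.finite_univ (α := L)).prod
        ((Set.Finite.pi (fun _ => Set.Finite.pi fun _ => DVals_finite σ)).prod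
          ((Set.finite_univ
            (α := Option (ClockT C) → Option (ClockT C) → Prop)).prod (WSet_finite σ))))
    rintro x ⟨q, hq, rfl⟩
    have hI : Inv σ q := Inv_reach hq
    refine ⟨Set.mem_univ _, ?_, Set.mem_univ _, word_mem_WSet hI⟩
    intro u _
    intro v _
    exact vB_mem_DVals hI.1 u v
  · -- the fingerprint map is injective on the reachable set
    intro q1 h1 q2 h2 heq
    have hI1 : Inv σ q1 := Inv_reach h1
    have hI2 : Inv σ q2 := Inv_reach h2
    have e1 : q1.1 = q2.1 := congrArg (fun x => x.1) heq
    have e2 : (fun u v => vB q1.2.1 u v) = fun u v => vB q2.2.1 u v :=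
      congrArg (fun x => x.2.1) heq
    have e3 : (fun u v => AttB q1.2.1 u v) = fun u v => AttB q2.2.1 u v :=
      congrArg (fun x => x.2.2.1) heq
    have e4 : q1.2.2 = q2.2.2 := congrArg (fun x => x.2.2.2) heq
    have hzeq : q1.2.1 = q2.2.1 := by
      apply zone_eq_of_bounds hI1.1.zone hI2.1.zone hI1.1.ne hI2.1.ne hI1.1.bdd hI2.1.bdd
      · intro u v
        exact congrFun (congrFun e2 u) v
      · intro u v
        exact iff_of_eq (congrFun (congrFun e3 u) v)
    exact Prod.ext_iff.mpr ⟨e1, Prod.ext_iff.mpr ⟨hzeq, e4⟩⟩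

end QTPM
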